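/- arXiv:2601.19764 — 5 statements merged into one kernel-verified Lean document; each statement's English description precedes it below -/
import Mathlib

section
/- Let H be a finitely generated group, and let G be a group with a surjective group homomorphism φ : G → H whose kernel is contained in the center of G (i.e., G is a central extension of H). Then every term Γₙ(H) with n ≥ 2 of the derived series of H is finitely generated if and only if every term Γₙ(G) with n ≥ 2 of the derived series of G is finitely generated. -/
open Subgroup
open scoped commutatorElement

section conj
variable {M : Type*} [Group M] (D : Subgroup M) [D.Normal]

/-- functor MulAut X →* MulAut (Abelianization X) -/
def autAb (X : Type*) [Group X] : MulAut X →* MulAut (Abelianization X) :=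
  MonoidHom.mk' (fun e => e.abelianizationCongr) (by
    intro e₁ e₂
    ext x
    obtain ⟨a, rfl⟩ := QuotientGroup.mk'_surjective (_root_.commutator X) x
    show MulEquiv.abelianizationCongr _ (Abelianization.of a) = _
    rw [abelianizationCongr_of]
    rfl)

/-- conjugation action of M on the abelianization of D -/
def conjAb : M →* MulAut (Abelianization ↥D) :=
  (autAb ↥D).comp MulAut.conjNormal

lemma conjAb_of (m : M) (d : ↥D) :
    conjAb D m (Abelianization.of d) = Abelianization.of (MulAut.conjNormal m d) := by
  simp only [conjAb, autAb, MonoidHom.comp_apply, MonoidHom.mk'_apply]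
  rw [abelianizationCongr_of]

lemma conjAb_triv_of_mem (c : M) (hc : c ∈ D) : conjAb D c = 1 := by
  ext x
  obtain ⟨d, rfl⟩ := (QuotientGroup.mk'_surjective (_root_.commutator ↥D)) x
  show conjAb D c (Abelianization.of d) = Abelianization.of d
  rw [conjAb_of]
  have : MulAut.conjNormal c d = ⟨c, hc⟩ * d * (⟨c, hc⟩ : ↥D)⁻¹ := by
    ext
    simp [MulAut.conjNormal_apply]
  rw [this]
  simp [mul_comm]
end conj

section modsetup2
variable {M : Type*} [Group M]

-- conj action on A := Abelianization (commutator M), factored through Abelianization M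
noncomputable def rhoAb : Abelianization M →* MulAut (Abelianization ↥(_root_.commutator M)) :=
  QuotientGroup.lift (_root_.commutator M) (conjAb (_root_.commutator M))
    (fun c hc => conjAb_triv_of_mem _ c hc)

lemma rhoAb_of (m : M) : rhoAb (Abelianization.of m) = conjAb (_root_.commutator M) m := rfl

-- hom to additive endomorphisms
def mulAutToEnd (A : Type*) [CommGroup A] : MulAut A →* AddMonoid.End (Additive A) where
  toFun e := AddMonoidHom.mk' (fun v => Additive.ofMul (e (Additive.toMul v)))
    (by intro a b; simp)
  map_one' := AddMonoidHom.ext fun v => rfl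
  map_mul' e₁ e₂ := AddMonoidHom.ext fun v => rfl

noncomputable def chi : Abelianization M →* AddMonoid.End (Additive (Abelianization ↥(_root_.commutator M))) :=
  (mulAutToEnd _).comp rhoAb

noncomputable def Phi : MonoidAlgebra ℤ (Abelianization M) →ₐ[ℤ]
    AddMonoid.End (Additive (Abelianization ↥(_root_.commutator M))) :=
  MonoidAlgebra.lift ℤ _ (Abelianization M) chi
end modsetup2

section keylemma
variable {M : Type*} [Group M]

noncomputable instance commMod :
    Module (MonoidAlgebra ℤ (Abelianization M))
      (Additive (Abelianization ↥(_root_.commutator M))) :=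
  Module.compHom _ (Phi (M := M)).toRingHom

lemma smul_eq_Phi (r : MonoidAlgebra ℤ (Abelianization M))
    (v : Additive (Abelianization ↥(_root_.commutator M))) :
    r • v = Phi r v := rfl

lemma of_smul (m : M) (v : Additive (Abelianization ↥(_root_.commutator M))) :
    (MonoidAlgebra.of ℤ (Abelianization M) (Abelianization.of m)) • v =
      Additive.ofMul (conjAb (_root_.commutator M) m (Additive.toMul v)) := by
  rw [smul_eq_Phi]
  show (MonoidAlgebra.lift ℤ _ (Abelianization M) chi) (MonoidAlgebra.of ℤ _ _) v = _
  rw [MonoidAlgebra.lift_of]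
  rfl

lemma single_smul (g : Abelianization M) (a : ℤ)
    (v : Additive (Abelianization ↥(_root_.commutator M))) :
    (MonoidAlgebra.single g a) • v = a • ((MonoidAlgebra.of ℤ (Abelianization M) g) • v) := by
  rw [smul_eq_Phi, smul_eq_Phi]
  show (MonoidAlgebra.lift ℤ _ (Abelianization M) chi) (MonoidAlgebra.single g a) v = _
  rw [MonoidAlgebra.lift_single]
  show (a • (chi g)) v = _
  rw [show (a • chi g) v = a • chi g v from rfl]
  congr 1
  show _ = (MonoidAlgebra.lift ℤ _ (Abelianization M) chi) (MonoidAlgebra.of ℤ _ _) v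
  rw [MonoidAlgebra.lift_of]
end keylemma
open Subgroup

section helpers
variable {M : Type*} [Group M]

lemma comm_central_left (a b z : M) (hz : z ∈ Subgroup.center M) :
    ⁅a * z, b⁆ = ⁅a, b⁆ := by
  have hzc := Subgroup.mem_center_iff.mp hz
  calc (a*z)*b*(a*z)⁻¹*b⁻¹ = a*(z*b*z⁻¹)*a⁻¹*b⁻¹ := by group
  _ = a*(b*z*z⁻¹)*a⁻¹*b⁻¹ := by rw [← hzc b]
  _ = ⁅a, b⁆ := by group

lemma comm_central (a b z w : M) (hz : z ∈ Subgroup.center M)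
    (hw : w ∈ Subgroup.center M) : ⁅a * z, b * w⁆ = ⁅a, b⁆ := by
  rw [comm_central_left _ _ _ hz, ← commutatorElement_inv, comm_central_left _ _ _ hw,
    commutatorElement_inv]

lemma commutator_le_normalClosure_comm {S : Set M} (hS : closure S = ⊤) :
    commutator M ≤ Subgroup.normalClosure (Set.image2 (fun a b => ⁅a, b⁆) S S) := by
  set C := Set.image2 (fun a b => ⁅a, b⁆) S S with hC
  set N := Subgroup.normalClosure C with hN
  set q := QuotientGroup.mk' N with hq
  have key : ∀ s ∈ S, ∀ h : M, q s * q h = q h * q s := by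
    intro s hs
    have hle : closure S ≤ Subgroup.comap q (Subgroup.centralizer {q s}) := by
      rw [closure_le]
      intro t ht
      simp only [Set.mem_preimage, SetLike.mem_coe, mem_comap]
      rw [Subgroup.mem_centralizer_iff]
      rintro x rfl
      have h1 : q ⁅s, t⁆ = 1 := by
        rw [← MonoidHom.mem_ker, QuotientGroup.ker_mk']
        exact Subgroup.subset_normalClosure (Set.mem_image2_of_mem hs ht)
      rw [map_commutatorElement] at h1
      exact commutatorElement_eq_one_iff_mul_comm.mp h1
    intro h
    have := hle (hS ▸ mem_top h)
    rw [mem_comap, Subgroup.mem_centralizer_iff] at this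
    exact this (q s) rfl
  have key2 : ∀ g h : M, q g * q h = q h * q g := by
    intro g h
    have hle : closure S ≤ Subgroup.comap q (Subgroup.centralizer {q h}) := by
      rw [closure_le]
      intro t ht
      simp only [Set.mem_preimage, SetLike.mem_coe, mem_comap]
      rw [Subgroup.mem_centralizer_iff]
      rintro x rfl
      exact (key t ht h).symm
    have := hle (hS ▸ mem_top g)
    rw [mem_comap, Subgroup.mem_centralizer_iff] at this
    exact (this (q h) rfl).symm
  rw [show _root_.commutator M = ⁅(⊤ : Subgroup M), ⊤⁆ from rfl, Subgroup.commutator_le]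
  intro g _ h _
  have h1 : q ⁅g, h⁆ = 1 := by
    rw [map_commutatorElement]
    exact commutatorElement_eq_one_iff_mul_comm.mpr (key2 g h)
  rwa [← MonoidHom.mem_ker, QuotientGroup.ker_mk'] at h1
end helpers

theorem commutator_fg_of_central {M Q : Type*} [Group M] [Group Q]
    (hM : Group.FG M) (ψ : M →* Q) (hsurj : Function.Surjective ψ)
    (hker : ψ.ker ≤ Subgroup.center M) (hQ : (_root_.commutator Q).FG) :
    (_root_.commutator M).FG := by
  classical
  haveI := hM
  obtain ⟨S, hS, hSfin⟩ := Group.fg_iff.mp hM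
  obtain ⟨T, hT, hTfin⟩ := (Subgroup.fg_iff _).mp hQ
  have hmap : (_root_.commutator M).map ψ = _root_.commutator Q := by
    have := map_derivedSeries_eq hsurj 1
    rwa [derivedSeries_one, derivedSeries_one] at this
  haveI : Finite ↥T := hTfin.to_subtype
  have hTlift : ∀ t : T, ∃ d, d ∈ _root_.commutator M ∧ ψ d = (t : Q) := by
    intro t
    have : (t : Q) ∈ (_root_.commutator M).map ψ := by
      rw [hmap, ← hT]; exact subset_closure t.2
    obtain ⟨d, hd, hdt⟩ := this
    exact ⟨d, hd, hdt⟩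
  choose kf hkD hkψ using hTlift
  set K : Set M := Set.range kf with hKdef
  have hKfin : K.Finite := Set.finite_range kf
  have hKD : closure K ≤ _root_.commutator M := by
    rw [closure_le]; rintro x ⟨t, rfl⟩; exact hkD t
  have hdecomp : ∀ x ∈ _root_.commutator M, ∃ kk ∈ closure K, ∃ z ∈ ψ.ker, x = kk * z := by
    intro x hx
    have h1 : ψ x ∈ closure T := by rw [hT, ← hmap]; exact mem_map_of_mem ψ hx
    have h2 : closure T ≤ (closure K).map ψ := by
      rw [closure_le]
      intro t ht
      exact ⟨kf ⟨t, ht⟩, subset_closure (Set.mem_range_self _), hkψ ⟨t, ht⟩⟩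
    obtain ⟨kk, hkk, hkkx⟩ := h2 h1
    refine ⟨kk, hkk, kk⁻¹ * x, ?_, by group⟩
    rw [MonoidHom.mem_ker, map_mul, map_inv, hkkx, inv_mul_cancel]
  have hDD : ⁅_root_.commutator M, _root_.commutator M⁆ ≤ closure K := by
    rw [Subgroup.commutator_le]
    intro a ha b hb
    obtain ⟨ka, hka, za, hza, rfl⟩ := hdecomp a ha
    obtain ⟨kb, hkb, zb, hzb, rfl⟩ := hdecomp b hb
    rw [comm_central _ _ _ _ (hker hza) (hker hzb)]
    show ka * kb * ka⁻¹ * kb⁻¹ ∈ closure K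
    exact mul_mem (mul_mem (mul_mem hka hkb) (inv_mem hka)) (inv_mem hkb)
  -- the module
  set D := _root_.commutator M with hDdef
  set R := MonoidAlgebra ℤ (Abelianization M) with hRdef
  set ι : ↥D → Additive (Abelianization ↥D) :=
    (fun d => Additive.ofMul (Abelianization.of d)) with hιdef
  have hιsurj : Function.Surjective ι := by
    intro v
    obtain ⟨d, hd⟩ := QuotientGroup.mk'_surjective (_root_.commutator ↥D) (Additive.toMul v)
    exact ⟨d, congrArg Additive.ofMul hd⟩
  have hDnormal : D.Normal := inferInstance
  have hconjmem : ∀ (m : M) (d : ↥D), m * (d : M) * m⁻¹ ∈ D := fun m d =>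
    hDnormal.conj_mem (d : M) d.2 m
  have hsmulι : ∀ (m : M) (d : ↥D),
      (MonoidAlgebra.of ℤ (Abelianization M) (Abelianization.of m)) • (ι d)
        = ι ⟨m * d * m⁻¹, hconjmem m d⟩ := by
    intro m d
    have h1 := of_smul (M := M) m (ι d)
    rw [h1]
    have h2 : Additive.toMul (ι d) = Abelianization.of d := rfl
    rw [h2, conjAb_of]
    exact congrArg Additive.ofMul (congrArg Abelianization.of
      (Subtype.ext (MulAut.conjNormal_apply m d)))
  set Cset : Set M := Set.image2 (fun a b => ⁅a, b⁆) S S with hCsetdef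
  have hCD : Cset ⊆ (D : Set M) := by
    rintro x ⟨a, ha, b, hb, rfl⟩
    exact commutator_mem_commutator (mem_top a) (mem_top b)
  set CV : Set (Additive (Abelianization ↥D)) := ι '' (Subtype.val ⁻¹' Cset) with hCVdef
  have hCVfin : CV.Finite :=
    (((hSfin.image2 _ hSfin).preimage (Set.injOn_of_injective Subtype.val_injective)).image ι)
  have hspan : Submodule.span R CV = ⊤ := by
    rw [Submodule.eq_top_iff']
    intro v
    obtain ⟨d, rfl⟩ := hιsurj v
    set P := Submodule.span R CV with hPdef
    set XA : Subgroup (Abelianization ↥D) := Subgroup.toAddSubgroup.symm P.toAddSubgroup with hXA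
    set X : Subgroup ↥D := XA.comap Abelianization.of with hX
    have hmemX : ∀ e : ↥D, e ∈ X ↔ ι e ∈ P := fun e => Iff.rfl
    have hY : Subgroup.normalClosure Cset ≤ X.map D.subtype := by
      have : Subgroup.normalClosure Cset = closure (Group.conjugatesOfSet Cset) := rfl
      rw [this, closure_le]
      intro y hy
      obtain ⟨a, haC, hconj⟩ := Group.mem_conjugatesOfSet_iff.mp hy
      obtain ⟨c, hc⟩ := isConj_iff.1 hconj
      have haD : a ∈ D := hCD haC
      have hyD : c * a * c⁻¹ ∈ D := hconjmem c ⟨a, haD⟩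
      refine ⟨⟨c * a * c⁻¹, hyD⟩, ?_, hc⟩
      have hsm := hsmulι c ⟨a, haD⟩
      show ι ⟨c * a * c⁻¹, hyD⟩ ∈ P
      rw [← hsm]
      exact Submodule.smul_mem P _ (Submodule.subset_span ⟨⟨a, haD⟩, haC, rfl⟩)
    have hDle : D ≤ Subgroup.normalClosure Cset := by
      rw [hDdef]
      exact commutator_le_normalClosure_comm hS
    obtain ⟨e, he, hde⟩ := hY (hDle d.2)
    have : e = d := Subtype.ext hde
    subst this
    exact (hmemX e).mp he
  haveI : Module.Finite R (Additive (Abelianization ↥D)) :=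
    ⟨⟨hCVfin.toFinset, by rw [Set.Finite.coe_toFinset]; exact hspan⟩⟩
  haveI : Group.FG (Abelianization M) :=
    Group.fg_of_surjective (f := (Abelianization.of : M →* Abelianization M))
      (fun a => (QuotientGroup.mk'_surjective (_root_.commutator M) a).imp fun _ hx => hx)
  haveI : Monoid.FG (Abelianization M) := Group.fg_iff_monoid_fg.mp inferInstance
  haveI : IsNoetherianRing R := Algebra.FiniteType.isNoetherianRing ℤ R
  haveI : IsNoetherian R (Additive (Abelianization ↥D)) :=
    isNoetherian_of_isNoetherianRing_of_finite R _
  set F : Submodule R (Additive (Abelianization ↥D)) :=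
    { carrier := {v | ∀ g : Abelianization M, (MonoidAlgebra.of ℤ (Abelianization M) g) • v = v}
      add_mem' := by intro a b ha hb g; rw [smul_add, ha g, hb g]
      zero_mem' := by intro g; rw [smul_zero]
      smul_mem' := by
        intro r v hv g
        rw [← mul_smul, mul_comm, mul_smul, hv g] } with hFdef
  have hFG : F.FG := IsNoetherian.noetherian F
  obtain ⟨W, hW⟩ := hFG
  have hzmul : ∀ r : R, ∀ v, v ∈ F → r • v ∈ AddSubgroup.zmultiples v := by
    intro r
    induction r using MonoidAlgebra.induction_linear with
    | zero => intro v _; rw [zero_smul]; exact zero_mem _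
    | add f g hf hg => intro v hv; rw [add_smul]; exact add_mem (hf v hv) (hg v hv)
    | single g a =>
      intro v hv
      have hs : (MonoidAlgebra.single g a : R) • v = a • v := by
        rw [single_smul, hv g]
      rw [hs]
      exact AddSubgroup.zsmul_mem _ (AddSubgroup.mem_zmultiples v) a
  have hFW : ∀ v, v ∈ F → v ∈ AddSubgroup.closure (W : Set (Additive (Abelianization ↥D))) := by
    intro v hv
    rw [← hW] at hv
    induction hv using Submodule.span_induction with
    | mem x hx => exact AddSubgroup.subset_closure hx
    | zero => exact zero_mem _
    | add x y _ _ hx hy => exact add_mem hx hy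
    | smul r x hxmem hx =>
      have hxF : x ∈ F := hW ▸ hxmem
      obtain ⟨n, hn⟩ := AddSubgroup.mem_zmultiples_iff.mp (hzmul r x hxF)
      rw [← hn]
      exact AddSubgroup.zsmul_mem _ hx n
  -- final assembly
  have hWlift : ∀ w : (W : Set (Additive (Abelianization ↥D))), ∃ d : ↥D, ι d = (w : _) :=
    fun w => hιsurj w
  choose wf hwf using hWlift
  set WD : Set ↥D := Set.range wf with hWDdef
  set Wl : Set M := Subtype.val '' WD with hWldef
  have hWlfin : Wl.Finite := (Set.finite_range wf).image _
  have hNF : ∀ z : ↥D, (z : M) ∈ ψ.ker → ι z ∈ F := by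
    intro z hz g
    obtain ⟨m, rfl⟩ : ∃ m, Abelianization.of m = g :=
      (QuotientGroup.mk'_surjective (_root_.commutator M) g).imp fun _ hx => hx
    rw [hsmulι m z]
    have heq : (⟨m * z * m⁻¹, hconjmem m z⟩ : ↥D) = z := by
      apply Subtype.ext
      have hcen := Subgroup.mem_center_iff.mp (hker hz)
      show m * (z : M) * m⁻¹ = (z : M)
      rw [hcen m]
      group
    rw [heq]
  have hWtrans : ∀ z : ↥D,
      ι z ∈ AddSubgroup.closure (W : Set (Additive (Abelianization ↥D))) →
      ∃ y ∈ Subgroup.closure WD, ∃ c ∈ _root_.commutator ↥D, z = y * c := by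
    intro z hz
    have hle : AddSubgroup.closure (W : Set (Additive (Abelianization ↥D))) ≤
        Subgroup.toAddSubgroup ((Subgroup.closure WD).map (Abelianization.of (G := ↥D))) := by
      rw [AddSubgroup.closure_le]
      intro v hv
      have hv2 : ι (wf ⟨v, hv⟩) = v := hwf ⟨v, hv⟩
      rw [← hv2]
      show Abelianization.of (wf ⟨v, hv⟩) ∈ (Subgroup.closure WD).map Abelianization.of
      exact mem_map_of_mem _ (subset_closure (Set.mem_range_self _))
    have h2 : Abelianization.of z ∈ (Subgroup.closure WD).map (Abelianization.of (G := ↥D)) :=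
      hle hz
    obtain ⟨y, hy, hyz⟩ := h2
    refine ⟨y, hy, y⁻¹ * z, ?_, by group⟩
    have h3 : (QuotientGroup.mk y : (↥D) ⧸ (_root_.commutator ↥D)) = QuotientGroup.mk z := hyz
    exact (QuotientGroup.eq).mp h3
  rw [Subgroup.fg_iff]
  refine ⟨K ∪ Wl, ?_, hKfin.union hWlfin⟩
  apply le_antisymm
  · rw [closure_le]
    rintro x (hx | hx)
    · exact hKD (subset_closure hx)
    · obtain ⟨d, _, rfl⟩ := hx
      exact d.2
  · intro x hx
    obtain ⟨kk, hkk, z, hzker, rfl⟩ := hdecomp x hx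
    have hkkD : kk ∈ D := hKD hkk
    have hzD : z ∈ D := by
      have h3 : kk⁻¹ * (kk * z) ∈ D := D.mul_mem (D.inv_mem hkkD) hx
      rwa [inv_mul_cancel_left] at h3
    obtain ⟨y, hy, c, hc, hzyc⟩ := hWtrans ⟨z, hzD⟩ (hFW _ (hNF ⟨z, hzD⟩ hzker))
    have hxeq : kk * z = kk * ((y : M) * (c : M)) := by
      have h4 := congrArg (Subtype.val) hzyc
      simp only [Subgroup.coe_mul] at h4
      rw [h4]
    rw [hxeq]
    have hsub1 : Subgroup.closure K ≤ Subgroup.closure (K ∪ Wl) :=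
      closure_mono Set.subset_union_left
    have hyK : (y : M) ∈ Subgroup.closure (K ∪ Wl) := by
      have h4 : (y : M) ∈ (Subgroup.closure WD).map D.subtype := mem_map_of_mem _ hy
      rw [MonoidHom.map_closure] at h4
      have h5 : (⇑D.subtype '' WD) = Wl := rfl
      rw [h5] at h4
      exact closure_mono Set.subset_union_right h4
    have hcK : (c : M) ∈ Subgroup.closure (K ∪ Wl) := by
      have h5 : (c : M) ∈ (_root_.commutator ↥D).map D.subtype := mem_map_of_mem _ hc
      have h6 : (_root_.commutator ↥D).map D.subtype = ⁅D, D⁆ := by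
        rw [show _root_.commutator ↥D = ⁅(⊤ : Subgroup ↥D), ⊤⁆ from rfl,
          Subgroup.map_commutator]
        congr 1 <;> rw [← MonoidHom.range_eq_map, Subgroup.range_subtype]
      rw [h6] at h5
      exact hsub1 (hDD h5)
    exact mul_mem (hsub1 hkk) (mul_mem hyK hcK)

lemma subgroupFGmap {G N : Type*} [Group G] [Group N] {P : Subgroup G} (h : P.FG)
    (f : G →* N) : (P.map f).FG := by
  obtain ⟨Sset, hSset, hfin⟩ := (Subgroup.fg_iff _).mp h
  exact (Subgroup.fg_iff _).mpr
    ⟨f '' Sset, by rw [← MonoidHom.map_closure, hSset], hfin.image _⟩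

lemma fg_of_map_injective_fg {G N : Type*} [Group G] [Group N] (f : G →* N)
    (hf : Function.Injective f) {P : Subgroup G} (h : (P.map f).FG) : P.FG := by
  rw [← Group.fg_iff_subgroup_fg] at h ⊢
  haveI := h
  exact Group.fg_of_surjective (f := (Subgroup.equivMapOfInjective P f hf).symm.toMonoidHom)
    (Subgroup.equivMapOfInjective P f hf).symm.surjective

lemma map_subtype_commutator {G : Type*} [Group G] (D : Subgroup G) :
    (_root_.commutator ↥D).map D.subtype = ⁅D, D⁆ := by
  rw [show _root_.commutator ↥D = ⁅(⊤ : Subgroup ↥D), ⊤⁆ from rfl, Subgroup.map_commutator]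
  congr 1 <;> rw [← MonoidHom.range_eq_map, Subgroup.range_subtype]

lemma center_le_center_subgroup {G : Type*} [Group G] (L : Subgroup G) {x : ↥L}
    (hx : (x : G) ∈ Subgroup.center G) : x ∈ Subgroup.center ↥L := by
  rw [Subgroup.mem_center_iff]
  intro y
  apply Subtype.ext
  exact Subgroup.mem_center_iff.mp hx (y : G)

lemma step_ind {G H : Type*} [Group G] [Group H] (φ : G →* H)
    (hsurj : Function.Surjective φ) (hker : φ.ker ≤ Subgroup.center G)
    (hH : Group.FG H) (hder : ∀ j : ℕ, 1 ≤ j → (derivedSeries H j).FG) :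
    ∀ k : ℕ, (derivedSeries G (k + 1)).FG := by
  intro k
  induction k with
  | zero =>
    -- first level, via the finitely generated subgroup L
    obtain ⟨S, hS, hSfin⟩ := Group.fg_iff.mp hH
    haveI : Finite ↥S := hSfin.to_subtype
    choose lf hlf using fun s : S => hsurj (s : H)
    set Ls : Set G := Set.range lf with hLs
    set L : Subgroup G := Subgroup.closure Ls with hL
    have hLfg : L.FG := (Subgroup.fg_iff _).mpr ⟨Ls, rfl, Set.finite_range lf⟩
    haveI hLFG : Group.FG ↥L := (Group.fg_iff_subgroup_fg L).mpr hLfg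
    have hmapL : L.map φ = ⊤ := by
      rw [hL, MonoidHom.map_closure]
      have himg : φ '' Ls = S := by
        rw [hLs, ← Set.range_comp]
        have : (φ ∘ lf) = fun s : S => (s : H) := funext fun s => hlf s
        rw [this, Subtype.range_coe]
      rw [himg, hS]
    set ψ : ↥L →* H := φ.comp L.subtype with hψ
    have hψsurj : Function.Surjective ψ := by
      intro h
      have : h ∈ L.map φ := hmapL ▸ Subgroup.mem_top h
      obtain ⟨g, hg, rfl⟩ := this
      exact ⟨⟨g, hg⟩, rfl⟩
    have hψker : ψ.ker ≤ Subgroup.center ↥L := by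
      intro x hx
      exact center_le_center_subgroup L (hker hx)
    have hQfg : (_root_.commutator H).FG := by
      rw [← derivedSeries_one]; exact hder 1 le_rfl
    have hLcomm := commutator_fg_of_central hLFG ψ hψsurj hψker hQfg
    have hcommeq : _root_.commutator G = ⁅L, L⁆ := by
      apply le_antisymm
      · rw [show _root_.commutator G = ⁅(⊤ : Subgroup G), ⊤⁆ from rfl, Subgroup.commutator_le]
        intro g _ h _
        have hgdec : ∃ l ∈ L, ∃ z ∈ φ.ker, g = l * z := by
          have : φ g ∈ L.map φ := hmapL ▸ Subgroup.mem_top _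
          obtain ⟨l, hl, hlg⟩ := this
          refine ⟨l, hl, l⁻¹ * g, ?_, by group⟩
          rw [MonoidHom.mem_ker, map_mul, map_inv, hlg, inv_mul_cancel]
        have hhdec : ∃ l ∈ L, ∃ z ∈ φ.ker, h = l * z := by
          have : φ h ∈ L.map φ := hmapL ▸ Subgroup.mem_top _
          obtain ⟨l, hl, hlg⟩ := this
          refine ⟨l, hl, l⁻¹ * h, ?_, by group⟩
          rw [MonoidHom.mem_ker, map_mul, map_inv, hlg, inv_mul_cancel]
        obtain ⟨l₁, hl₁, z₁, hz₁, rfl⟩ := hgdec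
        obtain ⟨l₂, hl₂, z₂, hz₂, rfl⟩ := hhdec
        rw [comm_central _ _ _ _ (hker hz₁) (hker hz₂)]
        exact Subgroup.commutator_mem_commutator hl₁ hl₂
      · exact Subgroup.commutator_mono le_top le_top
    rw [derivedSeries_one, hcommeq, ← _root_.map_subtype_commutator L]
    exact subgroupFGmap hLcomm L.subtype
  | succ k IH =>
    set Dk := derivedSeries G (k + 1) with hDk
    haveI hDkFG : Group.FG ↥Dk := (Group.fg_iff_subgroup_fg Dk).mpr IH
    have hmem : ∀ x : ↥Dk, φ (x : G) ∈ derivedSeries H (k + 1) := by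
      intro x
      rw [← map_derivedSeries_eq hsurj (k + 1)]
      exact Subgroup.mem_map_of_mem φ x.2
    set ψ : ↥Dk →* ↥(derivedSeries H (k + 1)) :=
      (φ.comp Dk.subtype).codRestrict _ (fun x => hmem x) with hψ
    have hψsurj : Function.Surjective ψ := by
      intro y
      have : (y : H) ∈ (derivedSeries G (k + 1)).map φ := by
        rw [map_derivedSeries_eq hsurj (k + 1)]; exact y.2
      obtain ⟨g, hg, hfg⟩ := this
      exact ⟨⟨g, hg⟩, Subtype.ext hfg⟩
    have hψker : ψ.ker ≤ Subgroup.center ↥Dk := by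
      intro x hx
      have : φ (x : G) = 1 := by
        have := congrArg (Subtype.val) (MonoidHom.mem_ker.mp hx)
        exact this
      exact center_le_center_subgroup Dk (hker this)
    have hQfg : (_root_.commutator ↥(derivedSeries H (k + 1))).FG := by
      apply fg_of_map_injective_fg _ (derivedSeries H (k + 1)).subtype_injective
      rw [_root_.map_subtype_commutator, ← derivedSeries_succ]
      exact hder (k + 2) (by omega)
    have := commutator_fg_of_central hDkFG ψ hψsurj hψker hQfg
    rw [derivedSeries_succ, ← _root_.map_subtype_commutator Dk]
    exact subgroupFGmap this Dk.subtype

/-- Let `H` be a finitely generated group and `G` a central extension of `H`. Then every term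
`Γₙ(H)` with `n ≥ 2` of the derived series of `H` is finitely generated if and only if every
term `Γₙ(G)` with `n ≥ 2` of the derived series of `G` is finitely generated.
(Here `Γₙ = derivedSeries · (n - 1)`, since Mathlib's derived series starts at index `0`.) -/
theorem derivedSeries_fg_iff_of_central_extension
    {G H : Type*} [Group G] [Group H] (φ : G →* H)
    (hsurj : Function.Surjective φ) (hker : φ.ker ≤ Subgroup.center G)
    (hH : Group.FG H) :
    (∀ n : ℕ, 2 ≤ n → (derivedSeries H (n - 1)).FG) ↔
      (∀ n : ℕ, 2 ≤ n → (derivedSeries G (n - 1)).FG) := by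
  constructor
  · intro hHside n hn
    have hder : ∀ j : ℕ, 1 ≤ j → (derivedSeries H j).FG := by
      intro j hj
      have := hHside (j + 1) (by omega)
      simpa using this
    obtain ⟨k, rfl⟩ : ∃ k, n = k + 2 := ⟨n - 2, by omega⟩
    have := step_ind φ hsurj hker hH hder k
    simpa using this
  · intro hGside n hn
    have := hGside n hn
    rw [← map_derivedSeries_eq hsurj (n - 1)]
    exact subgroupFGmap this φ
end

section
/- Let H be a Noetherian group, and let G be a group with a surjective group homomorphism φ : G → H whose kernel is contained in the center of G (i.e., G is a central extension of H). Then the derived series term Γₙ(G) is finitely generated for every n ≥ 2. -/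
open scoped commutatorElement

/-- A group is *Noetherian* if every subgroup is finitely generated. -/
def IsNoetherianGroup (G : Type*) [Group G] : Prop := ∀ K : Subgroup G, K.FG

section Helpers

open Subgroup

variable {G : Type*} [Group G]

private lemma comm_mul_central_left {g z c : G} (hz : z ∈ Subgroup.center G) :
    ⁅g * z, c⁆ = ⁅g, c⁆ := by
  have h1 : z * c * z⁻¹ = c := by
    rw [← Subgroup.mem_center_iff.mp hz c]
    group
  calc ⁅g * z, c⁆ = g * (z * c * z⁻¹) * g⁻¹ * c⁻¹ := by group
    _ = g * c * g⁻¹ * c⁻¹ := by rw [h1]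
    _ = ⁅g, c⁆ := by group

private lemma comm_mul_central_right {g z c : G} (hz : z ∈ Subgroup.center G) :
    ⁅c, g * z⁆ = ⁅c, g⁆ := by
  rw [← commutatorElement_inv, comm_mul_central_left hz, commutatorElement_inv]

private lemma central_absorb {g g' z z' : G} (hz : z ∈ Subgroup.center G)
    (hz' : z' ∈ Subgroup.center G) : ⁅g * z, g' * z'⁆ = ⁅g, g'⁆ := by
  rw [comm_mul_central_left hz, comm_mul_central_right hz']

private lemma fg_map' {N : Type*} [Group N] {K : Subgroup G} (h : K.FG) (f : G →* N) :
    (K.map f).FG := by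
  classical
  obtain ⟨S, hS⟩ := h
  refine ⟨S.image f, ?_⟩
  rw [Finset.coe_image, ← MonoidHom.map_closure, hS]

private lemma fg_of_map_injective {N : Type*} [Group N] (f : G →* N)
    (hf : Function.Injective f) {K : Subgroup G} (h : (K.map f).FG) : K.FG := by
  haveI : Group.FG ↥(K.map f) := (Group.fg_iff_subgroup_fg _).mpr h
  have e := (K.equivMapOfInjective f hf).symm
  haveI : Group.FG ↥K := Group.fg_of_surjective (f := e.toMonoidHom) e.surjective
  exact (Group.fg_iff_subgroup_fg K).mp this

private lemma noetherian_subgroup {H : Type*} [Group H] (hH : IsNoetherianGroup H)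
    (L : Subgroup H) : IsNoetherianGroup ↥L :=
  fun K => fg_of_map_injective L.subtype L.subtype_injective (hH _)

/-- If `S` generates `G`, then the commutator subgroup is the normal closure of the commutators
of elements of `S`. -/
private lemma commutator_eq_normalClosure' (S : Set G) (hS : Subgroup.closure S = ⊤) :
    commutator G = Subgroup.normalClosure {x : G | ∃ a ∈ S, ∃ b ∈ S, x = ⁅a, b⁆} := by
  set T : Set G := {x : G | ∃ a ∈ S, ∃ b ∈ S, x = ⁅a, b⁆} with hT
  apply le_antisymm
  · rw [_root_.commutator_def, Subgroup.commutator_le]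
    intro g _ h _
    set N := Subgroup.normalClosure T
    let π := QuotientGroup.mk' N
    have hc : Subgroup.closure (π '' S) = ⊤ := by
      rw [← MonoidHom.map_closure, hS, Subgroup.map_top_of_surjective _
        (QuotientGroup.mk'_surjective N)]
    have key : ∀ x y : G ⧸ N, Commute x y := by
      intro x y
      have hx : x ∈ Subgroup.closure (π '' S) := by rw [hc]; trivial
      have hy : y ∈ Subgroup.closure (π '' S) := by rw [hc]; trivial
      induction hx, hy using Subgroup.closure_induction₂ with
      | mem a b ha hb =>
        obtain ⟨a', ha', rfl⟩ := ha
        obtain ⟨b', hb', rfl⟩ := hb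
        rw [← commutatorElement_eq_one_iff_commute, ← map_commutatorElement]
        rw [← MonoidHom.mem_ker, QuotientGroup.ker_mk']
        exact Subgroup.subset_normalClosure ⟨a', ha', b', hb', rfl⟩
      | one_left x hx => exact Commute.one_left x
      | one_right x hx => exact Commute.one_right x
      | mul_left x y z _ _ _ h1 h2 => exact h1.mul_left h2
      | mul_right y z x _ _ _ h1 h2 => exact h1.mul_right h2
      | inv_left x y _ _ h1 => exact h1.inv_left
      | inv_right x y _ _ h1 => exact h1.inv_right
    have : π ⁅g, h⁆ = 1 := by
      rw [map_commutatorElement, commutatorElement_eq_one_iff_commute]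
      exact key _ _
    rw [← QuotientGroup.ker_mk' N, MonoidHom.mem_ker]
    exact this
  · apply Subgroup.normalClosure_le_normal
    rintro x ⟨a, _, b, _, rfl⟩
    rw [_root_.commutator_def]
    exact Subgroup.commutator_mem_commutator (Subgroup.mem_top a) (Subgroup.mem_top b)

end Helpers

section ModLemma

open Subgroup

/-- Abstract Noetherian module argument.  Let `P` be a group generated by a finite set `S`,
acting on an additive group `V` through `σ` with pairwise commuting images.  If `V` is generated,
as an additive group stable under the action, by a finite set `X`, then any `σ`-fixed additive
subgroup `b` of `V` is contained in the additive closure of a finite subset of itself. -/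
private lemma noetherian_module_aux {P : Type*} [Group P] {V : Type*} [AddCommGroup V]
    (σ : P →* Module.End ℤ V)
    (hcomm : ∀ g h : P, σ g * σ h = σ h * σ g)
    (S : Finset P) (hS : Subgroup.closure (↑S : Set P) = ⊤)
    (X : Set V) (hXfin : X.Finite)
    (hgen : ∀ s : AddSubgroup V, X ⊆ s → (∀ (g : P) (v : V), v ∈ s → σ g v ∈ s) →
      ∀ v : V, v ∈ s)
    (b : AddSubgroup V) (hb : ∀ (g : P) (v : V), v ∈ b → σ g v = v) :
    ∃ Y : Finset V, (↑Y : Set V) ⊆ b ∧ ∀ v ∈ b, v ∈ AddSubgroup.closure (↑Y : Set V) := by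
  classical
  -- the commutative ring of endomorphisms generated by the action of generators and inverses
  set e : (↥(↑S : Set P) × Bool) → Module.End ℤ V :=
    fun p => cond p.2 (σ (p.1 : P)) (σ ((p.1 : P)⁻¹)) with he
  have hecomm : ∀ x ∈ Set.range e, ∀ y ∈ Set.range e, x * y = y * x := by
    rintro _ ⟨⟨s₁, b₁⟩, rfl⟩ _ ⟨⟨s₂, b₂⟩, rfl⟩
    cases b₁ <;> cases b₂ <;> exact hcomm _ _
  set A₀ : Subalgebra ℤ (Module.End ℤ V) := Algebra.adjoin ℤ (Set.range e) with hA₀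
  have hσA : ∀ g : P, σ g ∈ A₀ ∧ σ g⁻¹ ∈ A₀ := by
    intro g
    have hg : g ∈ Subgroup.closure (↑S : Set P) := by rw [hS]; trivial
    induction hg using Subgroup.closure_induction with
    | mem x hx =>
      constructor
      · exact Algebra.subset_adjoin ⟨(⟨x, hx⟩, true), rfl⟩
      · exact Algebra.subset_adjoin ⟨(⟨x, hx⟩, false), rfl⟩
    | one =>
      constructor
      · rw [map_one]; exact one_mem A₀
      · rw [inv_one, map_one]; exact one_mem A₀
    | mul x y hx hy ihx ihy =>
      constructor
      · rw [map_mul]; exact mul_mem ihx.1 ihy.1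
      · rw [mul_inv_rev, map_mul]; exact mul_mem ihy.2 ihx.2
    | inv x hx ih =>
      exact ⟨ih.2, by rw [inv_inv]; exact ih.1⟩
  -- `A₀` is a Noetherian commutative ring
  letI : CommRing ↥A₀ := Algebra.adjoinCommRingOfComm ℤ hecomm
  have hA₀fg : A₀.FG := ⟨(Set.finite_range e).toFinset, by rw [Set.Finite.coe_toFinset]⟩
  haveI : Algebra.FiniteType ℤ ↥A₀ := (Subalgebra.fg_iff_finiteType A₀).mp hA₀fg
  haveI : IsNoetherianRing ↥A₀ := Algebra.FiniteType.isNoetherianRing ℤ ↥A₀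
  -- `V` as a module over `A₀`
  letI : Module ↥A₀ V := Module.compHom V A₀.val.toRingHom
  have hsmul : ∀ (a : ↥A₀) (v : V), a • v = (a : Module.End ℤ V) v := fun a v => rfl
  -- additive subgroups stable under the action of `σ` are stable under `A₀`
  have hstable : ∀ x : Module.End ℤ V, x ∈ A₀ →
      ∀ s : AddSubgroup V, (∀ (g : P) (v : V), v ∈ s → σ g v ∈ s) →
      ∀ v ∈ s, x v ∈ s := by
    intro x hx
    induction hx using Algebra.adjoin_induction with
    | mem y hy =>
      intro s hs v hv
      obtain ⟨⟨s₁, b₁⟩, rfl⟩ := hy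
      cases b₁ <;> exact hs _ v hv
    | algebraMap r =>
      intro s hs v hv
      rw [Module.algebraMap_end_apply]
      exact AddSubgroup.zsmul_mem s hv r
    | add x y hx hy ihx ihy =>
      intro s hs v hv
      rw [LinearMap.add_apply]
      exact s.add_mem (ihx s hs v hv) (ihy s hs v hv)
    | mul x y hx hy ihx ihy =>
      intro s hs v hv
      rw [Module.End.mul_apply]
      exact ihx s hs _ (ihy s hs v hv)
  -- a stable additive subgroup gives a submodule
  let mkSub : (s : AddSubgroup V) → (∀ (g : P) (v : V), v ∈ s → σ g v ∈ s) → Submodule ↥A₀ V :=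
    fun s hs =>
      { carrier := s
        add_mem' := fun h1 h2 => s.add_mem h1 h2
        zero_mem' := s.zero_mem
        smul_mem' := fun a v hv => by
          show (a : Module.End ℤ V) v ∈ s
          exact hstable _ a.2 s hs v hv }
  -- `V` is a finitely generated `A₀`-module
  have hspan : Submodule.span ↥A₀ X = ⊤ := by
    rw [eq_top_iff]
    intro v _
    refine hgen (Submodule.span ↥A₀ X).toAddSubgroup ?_ ?_ v
    · exact fun x hx => Submodule.subset_span hx
    · intro g w hw
      have h1 : σ g w = (⟨σ g, (hσA g).1⟩ : ↥A₀) • w := (hsmul ⟨σ g, (hσA g).1⟩ w).symm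
      rw [h1]
      exact Submodule.smul_mem _ _ hw
  haveI : Module.Finite ↥A₀ V :=
    ⟨⟨hXfin.toFinset, by rw [Set.Finite.coe_toFinset]; exact hspan⟩⟩
  haveI : IsNoetherian ↥A₀ V := isNoetherian_of_isNoetherianRing_of_finite ↥A₀ V
  -- the submodule corresponding to `b` is finitely generated
  have hbstable : ∀ (g : P) (v : V), v ∈ b → σ g v ∈ b := by
    intro g v hv
    rw [hb g v hv]; exact hv
  obtain ⟨Y, hY⟩ := IsNoetherian.noetherian (mkSub b hbstable)
  have hYb : (↑Y : Set V) ⊆ b := by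
    intro y hy
    have h1 := Submodule.subset_span (R := ↥A₀) hy
    rw [hY] at h1
    exact h1
  refine ⟨Y, hYb, ?_⟩
  -- the additive closure of `Y` is itself stable, hence a submodule containing `span Y = b`
  have hCstable : ∀ (g : P) (v : V), v ∈ AddSubgroup.closure (↑Y : Set V) →
      σ g v ∈ AddSubgroup.closure (↑Y : Set V) := by
    intro g v hv
    refine AddSubgroup.closure_induction ?_ ?_ ?_ ?_ hv
    · intro y hy
      rw [hb g y (hYb hy)]
      exact AddSubgroup.subset_closure hy
    · rw [map_zero]; exact AddSubgroup.zero_mem _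
    · intro x y hx hy ihx ihy
      rw [map_add]; exact AddSubgroup.add_mem _ ihx ihy
    · intro x hx ih
      rw [map_neg]; exact AddSubgroup.neg_mem _ ih
  intro v hv
  have h2 : mkSub b hbstable ≤ mkSub (AddSubgroup.closure (↑Y : Set V)) hCstable := by
    rw [← hY]
    exact Submodule.span_le.mpr (fun y hy => AddSubgroup.subset_closure hy)
  exact h2 hv

/-- In a finitely generated group `P` whose commutator subgroup is abelian, every central
subgroup contained in the commutator subgroup is finitely generated.  (This is where the
Hilbert basis theorem enters: the commutator subgroup is a Noetherian module over a finitely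
generated commutative ring of endomorphisms induced by conjugation.) -/
private lemma central_subgroup_of_metabelian_fg {P : Type*} [Group P] [hPfg : Group.FG P]
    (hab : ∀ x y : ↥(commutator P), Commute x y)
    (B : Subgroup P) (hBM : B ≤ commutator P) (hBc : B ≤ Subgroup.center P) : B.FG := by
  classical
  set M : Subgroup P := commutator P with hM
  have hmemM : ∀ g h : P, ⁅g, h⁆ ∈ M :=
    fun g h => Subgroup.commutator_mem_commutator (Subgroup.mem_top g) (Subgroup.mem_top h)
  letI : CommGroup ↥M :=
    { (inferInstance : Group ↥M) with mul_comm := fun a b => hab a b }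
  -- extensionality for `Additive ↥M` via the underlying elements of `P`
  have Vext : ∀ v w : Additive ↥M,
      ((Additive.toMul v : ↥M) : P) = ((Additive.toMul w : ↥M) : P) → v = w :=
    fun v w h => congrArg Additive.ofMul (Subtype.ext h)
  -- the conjugation action of `P` on `M`
  let cA : P → Module.End ℤ (Additive ↥M) := fun g =>
    (MonoidHom.toAdditive ((MulAut.conjNormal (H := M) g).toMonoidHom)).toIntLinearMap
  have cA_coe : ∀ (g : P) (v : Additive ↥M),
      ((Additive.toMul (cA g v) : ↥M) : P) = g * ((Additive.toMul v : ↥M) : P) * g⁻¹ :=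
    fun g v => MulAut.conjNormal_apply g (Additive.toMul v)
  let σ : P →* Module.End ℤ (Additive ↥M) :=
    { toFun := cA
      map_one' := by
        apply LinearMap.ext; intro v
        apply Vext
        rw [cA_coe]
        show (1 : P) * _ * (1 : P)⁻¹ = ((Additive.toMul v : ↥M) : P)
        group
      map_mul' := by
        intro g h
        apply LinearMap.ext; intro v
        apply Vext
        rw [Module.End.mul_apply, cA_coe, cA_coe, cA_coe, mul_inv_rev]
        group }
  have σcoe : ∀ (g : P) (v : Additive ↥M),
      ((Additive.toMul (σ g v) : ↥M) : P) = g * ((Additive.toMul v : ↥M) : P) * g⁻¹ :=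
    fun g v => cA_coe g v
  have hσM : ∀ m : P, m ∈ M → σ m = 1 := by
    intro m hm
    apply LinearMap.ext; intro v
    apply Vext
    rw [σcoe]
    show m * _ * m⁻¹ = ((Additive.toMul v : ↥M) : P)
    have hcmv : m * ((Additive.toMul v : ↥M) : P) = ((Additive.toMul v : ↥M) : P) * m :=
      congrArg Subtype.val (hab ⟨m, hm⟩ (Additive.toMul v))
    rw [hcmv]
    group
  have hcommσ : ∀ g h : P, σ g * σ h = σ h * σ g := by
    intro g h
    have h1 : ∀ a b : P, σ (a * b) = σ (b * a) := by
      intro a b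
      have h2 : a * b = ⁅a, b⁆ * (b * a) := by group
      rw [h2, map_mul, hσM _ (hmemM a b), one_mul]
    rw [← map_mul, ← map_mul, h1]
  -- a finite generating set for `P`
  obtain ⟨S, hS⟩ := Group.fg_def.mp hPfg
  -- generators of `M` as a stable additive subgroup: commutators of generators of `P`
  set XP : Set P := {x | ∃ a ∈ (↑S : Set P), ∃ b ∈ (↑S : Set P), x = ⁅a, b⁆} with hXP
  have hXPfin : XP.Finite := by
    have h1 : XP = (fun q : P × P => ⁅q.1, q.2⁆) '' ((↑S : Set P) ×ˢ (↑S : Set P)) := by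
      ext x; constructor
      · rintro ⟨a, ha, b, hb, rfl⟩; exact ⟨(a, b), ⟨ha, hb⟩, rfl⟩
      · rintro ⟨⟨a, b⟩, ⟨ha, hb⟩, rfl⟩; exact ⟨a, ha, b, hb, rfl⟩
    rw [h1]
    exact (S.finite_toSet.prod S.finite_toSet).image _
  set X : Set (Additive ↥M) := {v | ((Additive.toMul v : ↥M) : P) ∈ XP} with hX
  have hXfin : X.Finite := by
    have h1 : Function.Injective (fun v : Additive ↥M => ((Additive.toMul v : ↥M) : P)) :=
      fun v w h => Vext v w h
    exact Set.Finite.preimage h1.injOn hXPfin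
  -- the generation hypothesis for `noetherian_module_aux`
  have hgen : ∀ s : AddSubgroup (Additive ↥M), X ⊆ s →
      (∀ (g : P) (v : Additive ↥M), v ∈ s → σ g v ∈ s) → ∀ v : Additive ↥M, v ∈ s := by
    intro s hXs hs v
    -- the subgroup of `P` corresponding to `s`
    set SG' : Subgroup P :=
      { carrier := {p | ∃ hp : p ∈ M, Additive.ofMul (⟨p, hp⟩ : ↥M) ∈ s}
        one_mem' := ⟨M.one_mem, s.zero_mem⟩
        mul_mem' := by
          rintro a b ⟨ha, hsa⟩ ⟨hb, hsb⟩
          exact ⟨mul_mem ha hb, s.add_mem hsa hsb⟩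
        inv_mem' := by
          rintro a ⟨ha, hsa⟩
          exact ⟨inv_mem ha, s.neg_mem hsa⟩ } with hSGdef2
    haveI hSGnormal : SG'.Normal := by
      constructor
      intro p hp g
      obtain ⟨hpM, hps⟩ := hp
      have hp' : g * p * g⁻¹ ∈ M := Subgroup.Normal.conj_mem inferInstance p hpM g
      refine ⟨hp', ?_⟩
      have h1 : Additive.ofMul (⟨g * p * g⁻¹, hp'⟩ : ↥M) = σ g (Additive.ofMul (⟨p, hpM⟩ : ↥M)) := by
        apply Vext
        rw [σcoe]
        rfl
      rw [h1]
      exact hs g _ hps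
    have hMle : M ≤ SG' := by
      rw [hM, commutator_eq_normalClosure' (↑S : Set P) hS]
      apply Subgroup.normalClosure_le_normal
      rintro x ⟨a, ha, b, hb, rfl⟩
      refine ⟨hmemM a b, hXs ?_⟩
      exact ⟨a, ha, b, hb, rfl⟩
    have h2 : ((Additive.toMul v : ↥M) : P) ∈ SG' := hMle (Additive.toMul v).2
    obtain ⟨hpM, hps⟩ := h2
    have h3 : Additive.ofMul (⟨((Additive.toMul v : ↥M) : P), hpM⟩ : ↥M) = v := Vext _ _ rfl
    rwa [h3] at hps
  -- the stable additive subgroup corresponding to `B`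
  set sB : AddSubgroup (Additive ↥M) :=
    { carrier := {v | ((Additive.toMul v : ↥M) : P) ∈ B}
      zero_mem' := B.one_mem
      add_mem' := by
        intro x y hx hy
        exact B.mul_mem hx hy
      neg_mem' := by
        intro x hx
        exact B.inv_mem hx } with hsB
  have hbfix : ∀ (g : P) (v : Additive ↥M), v ∈ sB → σ g v = v := by
    intro g v hv
    apply Vext
    rw [σcoe]
    have h1 : g * ((Additive.toMul v : ↥M) : P) = ((Additive.toMul v : ↥M) : P) * g :=
      Subgroup.mem_center_iff.mp (hBc hv) g
    rw [h1]
    group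
  obtain ⟨Y, hYb, hYgen⟩ := noetherian_module_aux σ hcommσ S hS X hXfin hgen sB hbfix
  -- transfer back to `P`
  set YP : Set P := (fun v : Additive ↥M => ((Additive.toMul v : ↥M) : P)) '' ↑Y with hYP
  have hYPB : YP ⊆ ↑B := by
    rintro _ ⟨y, hy, rfl⟩
    exact hYb hy
  have hBle : B ≤ Subgroup.closure YP := by
    intro p hp
    have hpM : p ∈ M := hBM hp
    have hv : Additive.ofMul (⟨p, hpM⟩ : ↥M) ∈ sB := hp
    have hvC := hYgen _ hv
    have push : ∀ v, v ∈ AddSubgroup.closure (↑Y : Set (Additive ↥M)) →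
        ((Additive.toMul v : ↥M) : P) ∈ Subgroup.closure YP := by
      intro v hv'
      refine AddSubgroup.closure_induction ?_ ?_ ?_ ?_ hv'
      · intro y hy
        exact Subgroup.subset_closure ⟨y, hy, rfl⟩
      · exact Subgroup.one_mem _
      · intro x y hx hy ihx ihy
        exact Subgroup.mul_mem _ ihx ihy
      · intro x hx ih
        exact Subgroup.inv_mem _ ih
    exact push _ hvC
  have hBeq : B = Subgroup.closure YP :=
    le_antisymm hBle ((Subgroup.closure_le B).mpr hYPB)
  exact (Subgroup.fg_iff B).mpr ⟨YP, hBeq.symm, Y.finite_toSet.image _⟩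

end ModLemma

section MainLemma

open Subgroup

/-- Main lemma, finitely generated case: if `G` is finitely generated, `φ : G → H` is surjective
with central kernel and `H` is Noetherian, then the commutator subgroup of `G` is finitely
generated. -/
private lemma commutator_fg_of_fg {G H : Type*} [Group G] [Group H] [Group.FG G] (φ : G →* H)
    (hsurj : Function.Surjective φ) (hker : φ.ker ≤ Subgroup.center G)
    (hH : IsNoetherianGroup H) : (commutator G).FG := by
  classical
  set K := commutator G with hK
  set N : Subgroup G := ⁅K, K⁆ with hN
  haveI : N.Normal := Subgroup.commutator_normal K K
  have hπsurj : Function.Surjective (QuotientGroup.mk' N) := QuotientGroup.mk'_surjective N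
  have hmapK : Subgroup.map (QuotientGroup.mk' N) K = commutator (G ⧸ N) := by
    rw [hK, _root_.commutator_def, _root_.commutator_def, Subgroup.map_commutator,
      Subgroup.map_top_of_surjective _ hπsurj]
  have habel : ∀ x y : ↥(commutator (G ⧸ N)), Commute x y := by
    intro x y
    have h1 : ⁅commutator (G ⧸ N), commutator (G ⧸ N)⁆ = (⊥ : Subgroup (G ⧸ N)) := by
      rw [← hmapK, ← Subgroup.map_commutator, ← hN, QuotientGroup.map_mk'_self]
    have h2 : ⁅(x : G ⧸ N), (y : G ⧸ N)⁆ = 1 := by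
      have h3 := Subgroup.commutator_mem_commutator x.2 y.2
      rw [h1] at h3
      exact Subgroup.mem_bot.mp h3
    exact Subtype.ext (commutatorElement_eq_one_iff_commute.mp h2)
  set A : Subgroup G := K ⊓ φ.ker with hA
  have hAK : A ≤ K := inf_le_left
  have hAcent : A ≤ Subgroup.center G := le_trans inf_le_right hker
  set B := Subgroup.map (QuotientGroup.mk' N) A with hB
  have hBM : B ≤ commutator (G ⧸ N) := by
    rw [← hmapK]; exact Subgroup.map_mono hAK
  have hBc : B ≤ Subgroup.center (G ⧸ N) := by
    rintro _ ⟨a, ha, rfl⟩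
    rw [Subgroup.mem_center_iff]
    intro q
    obtain ⟨g, rfl⟩ := hπsurj q
    rw [← map_mul, ← map_mul, Subgroup.mem_center_iff.mp (hAcent ha) g]
  haveI : Group.FG (G ⧸ N) := Group.fg_of_surjective hπsurj
  have hBfg : B.FG := central_subgroup_of_metabelian_fg habel B hBM hBc
  -- lift generators of `B` into `A`
  obtain ⟨YB, hYB⟩ := hBfg
  have hmem : ∀ y : G ⧸ N, y ∈ (↑YB : Set (G ⧸ N)) → ∃ a, a ∈ A ∧ QuotientGroup.mk' N a = y := by
    intro y hy
    have h1 : y ∈ B := by rw [← hYB]; exact Subgroup.subset_closure hy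
    obtain ⟨a, ha, rfl⟩ := h1
    exact ⟨a, ha, rfl⟩
  choose wa hwaA hwaπ using hmem
  set WS : Set G := Set.range (fun y : ↥(↑YB : Set (G ⧸ N)) => wa y y.2) with hWS
  have hWSfin : WS.Finite := Set.finite_range _
  have hWSA : WS ⊆ ↑A := by rintro _ ⟨y, rfl⟩; exact hwaA y y.2
  have hπWS : QuotientGroup.mk' N '' WS = ↑YB := by
    ext y; constructor
    · rintro ⟨_, ⟨u, rfl⟩, rfl⟩
      rw [hwaπ u u.2]; exact u.2
    · intro hy; exact ⟨wa y hy, ⟨⟨y, hy⟩, rfl⟩, hwaπ y hy⟩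
  have hAW : A ≤ Subgroup.closure WS ⊔ N := by
    intro a ha
    have h1 : QuotientGroup.mk' N a ∈ Subgroup.map (QuotientGroup.mk' N) (Subgroup.closure WS) := by
      rw [MonoidHom.map_closure, hπWS, hYB]
      exact ⟨a, ha, rfl⟩
    obtain ⟨u, hu, huπ⟩ := h1
    have h2 : u⁻¹ * a ∈ N := by
      rw [← QuotientGroup.ker_mk' N]
      show (QuotientGroup.mk' N) (u⁻¹ * a) = 1
      rw [map_mul, map_inv, huπ]
      simp
    have h3 : a = u * (u⁻¹ * a) := by group
    rw [h3]
    exact Subgroup.mul_mem _ (Subgroup.mem_sup_left hu) (Subgroup.mem_sup_right h2)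
  -- lift generators of `commutator H` into `K`
  obtain ⟨YH, hYH⟩ := hH (commutator H)
  have hmapKH : Subgroup.map φ K = commutator H := by
    rw [hK, _root_.commutator_def, _root_.commutator_def, Subgroup.map_commutator,
      Subgroup.map_top_of_surjective _ hsurj]
  have hmemH : ∀ y : H, y ∈ (↑YH : Set H) → ∃ t, t ∈ K ∧ φ t = y := by
    intro y hy
    have h1 : y ∈ commutator H := by rw [← hYH]; exact Subgroup.subset_closure hy
    rw [← hmapKH] at h1
    obtain ⟨t, ht, rfl⟩ := h1
    exact ⟨t, ht, rfl⟩
  choose tt httK httφ using hmemH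
  set TS : Set G := Set.range (fun y : ↥(↑YH : Set H) => tt y y.2) with hTS
  have hTSfin : TS.Finite := Set.finite_range _
  have hTSK : TS ⊆ ↑K := by rintro _ ⟨y, rfl⟩; exact httK y y.2
  have hφTS : φ '' TS = ↑YH := by
    ext y; constructor
    · rintro ⟨_, ⟨u, rfl⟩, rfl⟩
      rw [httφ u u.2]; exact u.2
    · intro hy; exact ⟨tt y hy, ⟨⟨y, hy⟩, rfl⟩, httφ y hy⟩
  have hdec : ∀ k, k ∈ K → ∃ u ∈ Subgroup.closure TS, ∃ a ∈ A, k = u * a := by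
    intro k hk
    have h1 : φ k ∈ Subgroup.map φ (Subgroup.closure TS) := by
      rw [MonoidHom.map_closure, hφTS, hYH, ← hmapKH]
      exact ⟨k, hk, rfl⟩
    obtain ⟨u, hu, huφ⟩ := h1
    have huK : u ∈ K := (Subgroup.closure_le K).mpr hTSK hu
    refine ⟨u, hu, u⁻¹ * k, ⟨Subgroup.mul_mem _ (Subgroup.inv_mem _ huK) hk, ?_⟩, by group⟩
    show φ (u⁻¹ * k) = 1
    rw [map_mul, map_inv, huφ]
    simp
  set U := Subgroup.closure (TS ∪ WS) with hU
  have hTU : Subgroup.closure TS ≤ U := Subgroup.closure_mono Set.subset_union_left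
  have hWU : Subgroup.closure WS ≤ U := Subgroup.closure_mono Set.subset_union_right
  have hUK : U ≤ K := (Subgroup.closure_le K).mpr
    (Set.union_subset hTSK (fun x hx => hAK (hWSA hx)))
  have hNU : N ≤ U := by
    rw [hN, Subgroup.commutator_le]
    intro g hg h hh
    obtain ⟨u, hu, a, haA, rfl⟩ := hdec g hg
    obtain ⟨v, hv, b, hbA, rfl⟩ := hdec h hh
    rw [central_absorb (hAcent haA) (hAcent hbA), commutatorElement_def]
    exact mul_mem (mul_mem (mul_mem (hTU hu) (hTU hv)) (inv_mem (hTU hu))) (inv_mem (hTU hv))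
  have hAU : A ≤ U := le_trans hAW (sup_le hWU hNU)
  have hKU : K ≤ U := by
    intro k hk
    obtain ⟨u, hu, a, haA, rfl⟩ := hdec k hk
    exact mul_mem (hTU hu) (hAU haA)
  have hKeq : K = U := le_antisymm hKU hUK
  rw [hKeq]
  exact (Subgroup.fg_iff U).mpr ⟨TS ∪ WS, hU.symm, hTSfin.union hWSfin⟩

/-- Main lemma: if `φ : G → H` is surjective with central kernel and `H` is Noetherian, then the
commutator subgroup of `G` is finitely generated. -/
private lemma commutator_fg {G H : Type*} [Group G] [Group H] (φ : G →* H)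
    (hsurj : Function.Surjective φ) (hker : φ.ker ≤ Subgroup.center G)
    (hH : IsNoetherianGroup H) : (commutator G).FG := by
  classical
  obtain ⟨SH, hSH⟩ := hH ⊤
  choose lift hlift using hsurj
  set SG : Set G := lift '' ↑SH with hSGdef
  have hSGfin : SG.Finite := SH.finite_toSet.image _
  set G₀ := Subgroup.closure SG with hG₀
  have hmapG₀ : Subgroup.map φ G₀ = ⊤ := by
    rw [hG₀, MonoidHom.map_closure]
    have himg : φ '' SG = ↑SH := by
      ext y; constructor
      · rintro ⟨x, ⟨s, hs, rfl⟩, rfl⟩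
        rw [hlift s]; exact hs
      · intro hy; exact ⟨lift y, ⟨y, hy, rfl⟩, hlift y⟩
    rw [himg, hSH]
  haveI : Finite ↥SG := hSGfin.to_subtype
  haveI : Group.FG ↥G₀ := Group.closure_finite_fg SG
  set φ₀ : ↥G₀ →* H := φ.comp G₀.subtype with hφ₀
  have hsurj₀ : Function.Surjective φ₀ := by
    intro h
    have h1 : h ∈ Subgroup.map φ G₀ := by rw [hmapG₀]; trivial
    obtain ⟨g, hg, rfl⟩ := h1
    exact ⟨⟨g, hg⟩, rfl⟩
  have hker₀ : φ₀.ker ≤ Subgroup.center ↥G₀ := by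
    intro x hx
    have h1 : (x : G) ∈ φ.ker := hx
    have hc := hker h1
    rw [Subgroup.mem_center_iff]
    intro y
    exact Subtype.ext (Subgroup.mem_center_iff.mp hc (y : G))
  have h0 : (commutator ↥G₀).FG := commutator_fg_of_fg φ₀ hsurj₀ hker₀ hH
  have hdecomp : ∀ g : G, ∃ g₀ ∈ G₀, ∃ z ∈ φ.ker, g = g₀ * z := by
    intro g
    have h1 : φ g ∈ Subgroup.map φ G₀ := by rw [hmapG₀]; trivial
    obtain ⟨g₀, hg₀, hφg⟩ := h1
    refine ⟨g₀, hg₀, g₀⁻¹ * g, ?_, by group⟩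
    rw [MonoidHom.mem_ker, map_mul, map_inv, hφg]
    simp
  have hcomm : commutator G = Subgroup.map G₀.subtype (commutator ↥G₀) := by
    rw [_root_.commutator_def, _root_.commutator_def, Subgroup.map_commutator]
    have htop : Subgroup.map G₀.subtype ⊤ = G₀ := by
      rw [← MonoidHom.range_eq_map, Subgroup.range_subtype]
    rw [htop]
    apply le_antisymm
    · rw [Subgroup.commutator_le]
      intro g _ h _
      obtain ⟨g₀, hg₀, z, hz, rfl⟩ := hdecomp g
      obtain ⟨h₀, hh₀, w, hw, rfl⟩ := hdecomp h
      rw [central_absorb (hker hz) (hker hw)]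
      exact Subgroup.commutator_mem_commutator hg₀ hh₀
    · exact Subgroup.commutator_mono le_top le_top
  rw [hcomm]
  exact fg_map' h0 G₀.subtype

end MainLemma

/-- Let `H` be a Noetherian group and `G` a central extension of `H`. Then the derived series
term `Γₙ(G)` is finitely generated for every `n ≥ 2`.
(Here `Γₙ = derivedSeries · (n - 1)`, since Mathlib's derived series starts at index `0`.) -/
theorem derivedSeries_fg_of_central_extension_of_noetherian
    {G H : Type*} [Group G] [Group H] (φ : G →* H)
    (hsurj : Function.Surjective φ) (hker : φ.ker ≤ Subgroup.center G)
    (hH : IsNoetherianGroup H) :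
    ∀ n : ℕ, 2 ≤ n → (derivedSeries G (n - 1)).FG := by
  -- It suffices to prove the claim for indices of the form `j + 1`.
  suffices key : ∀ j : ℕ, (derivedSeries G (j + 1)).FG by
    intro n hn
    have : n - 1 = (n - 2) + 1 := by omega
    rw [this]
    exact key (n - 2)
  intro j
  -- `K` is the `j`-th term of the derived series, `L` its image in `H`.
  set K := derivedSeries G j
  set L := Subgroup.map φ K
  -- the restriction `K → L` is surjective with central kernel, and `L` is Noetherian.
  have hLnoeth : IsNoetherianGroup ↥L := noetherian_subgroup hH L
  have hsurj' : Function.Surjective (φ.subgroupMap K) := φ.subgroupMap_surjective K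
  have hker' : (φ.subgroupMap K).ker ≤ Subgroup.center ↥K := by
    intro x hx
    have hx1 : φ (x : G) = 1 := by
      have : ((φ.subgroupMap K x : ↥L) : H) = ((1 : ↥L) : H) := by
        rw [MonoidHom.mem_ker.mp hx]
      simpa using this
    have hxc : (x : G) ∈ Subgroup.center G := hker hx1
    rw [Subgroup.mem_center_iff]
    intro y
    exact Subtype.ext (Subgroup.mem_center_iff.mp hxc (y : G))
  -- commutator of `↥K` is finitely generated by the main lemma.
  have hcfg : (commutator ↥K).FG := commutator_fg (φ.subgroupMap K) hsurj' hker' hLnoeth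
  -- transfer to `derivedSeries G (j+1) = ⁅K, K⁆`.
  have hmap : Subgroup.map K.subtype (commutator ↥K) = derivedSeries G (j + 1) := by
    rw [commutator_def, Subgroup.map_commutator, derivedSeries_succ]
    congr 1 <;>
      rw [← MonoidHom.range_eq_map, Subgroup.range_subtype]
  rw [← hmap]
  exact fg_map' hcfg K.subtype
end

section
/- Let H be a finitely generated group, and let G be a group with a surjective group homomorphism φ : G → H whose kernel is contained in the center of G (i.e., G is a central extension of H). Fix an integer n ≥ 1 and suppose that the lower central series term γₙ(G) is finitely generated. Then γ_{n+1}(G) is finitely generated if and only if γ_{n+1}(H) is finitely generated. -/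
open scoped commutatorElement

/-- For a surjective homomorphism, the lower central series maps onto the
lower central series. -/

private lemma lcs_succ_comm {G : Type*} [Group G] (n : ℕ) :
    (⊤ : Subgroup G).lowerCentralSeries (n + 1) = ⁅(⊤ : Subgroup G).lowerCentralSeries n, (⊤ : Subgroup G)⁆ := by
  exact Subgroup.lowerCentralSeries_succ _ n

private lemma lcs_map_eq {G H : Type*} [Group G] [Group H] (φ : G →* H)
    (hsurj : Function.Surjective φ) (n : ℕ) :
    ((⊤ : Subgroup G).lowerCentralSeries n).map φ = (⊤ : Subgroup H).lowerCentralSeries n := by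
  induction n with
  | zero =>
    simp only [Subgroup.lowerCentralSeries_zero]
    rw [← MonoidHom.range_eq_map]
    exact MonoidHom.range_eq_top.mpr hsurj
  | succ n ih =>
    rw [lcs_succ_comm, lcs_succ_comm, Subgroup.map_commutator, ih,
      ← MonoidHom.range_eq_map, MonoidHom.range_eq_top.mpr hsurj]

private lemma backward_fg {G H : Type*} [Group G] [Group H] (φ : G →* H)
    (hsurj : Function.Surjective φ) (hker : φ.ker ≤ Subgroup.center G)
    (hH : Group.FG H) (m : ℕ)
    (hA : ((⊤ : Subgroup G).lowerCentralSeries m).FG)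
    (hQ : ((⊤ : Subgroup H).lowerCentralSeries (m + 1)).FG) :
    ((⊤ : Subgroup G).lowerCentralSeries (m + 1)).FG := by
  classical
  set A : Subgroup G := (⊤ : Subgroup G).lowerCentralSeries m with hAdef
  set L : Subgroup G := (⊤ : Subgroup G).lowerCentralSeries (m + 1) with hLdef
  set N : Subgroup G := (⊤ : Subgroup G).lowerCentralSeries (m + 2) with hNdef
  have hLcomm : L = ⁅A, (⊤ : Subgroup G)⁆ := by
    rw [hLdef, hAdef]; exact lcs_succ_comm m
  have hNcomm : N = ⁅L, (⊤ : Subgroup G)⁆ := by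
    rw [hNdef, hLdef]; exact lcs_succ_comm (m + 1)
  have hNL : N ≤ L := by
    rw [hNdef, hLdef]; exact Subgroup.lowerCentralSeries_antitone _ (by omega)
  haveI hLn : L.Normal := by rw [hLdef]; infer_instance
  haveI hNn : N.Normal := by rw [hNdef]; infer_instance
  set D : Subgroup G := ⁅L, L⁆ with hDdef
  haveI hDn : D.Normal := by rw [hDdef]; infer_instance
  -- centrality of the kernel
  have hcent : ∀ k ∈ φ.ker, ∀ x : G, x * k = k * x := fun k hk x =>
    Subgroup.mem_center_iff.mp (hker hk) x
  have hccR : ∀ g x k : G, k ∈ φ.ker → ⁅g, x * k⁆ = ⁅g, x⁆ := by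
    intro g x k hk
    have h2 : k * g⁻¹ = g⁻¹ * k := (hcent k hk g⁻¹).symm
    have e1 : ⁅g, x * k⁆ = g * x * (k * g⁻¹) * k⁻¹ * x⁻¹ := by
      simp only [commutatorElement_def]; group
    rw [e1, h2]
    simp only [commutatorElement_def]; group
  have hccL : ∀ x k g : G, k ∈ φ.ker → ⁅x * k, g⁆ = ⁅x, g⁆ := by
    intro x k g hk
    rw [← commutatorElement_inv g (x * k), hccR g x k hk, commutatorElement_inv]
  -- basic commutator memberships
  have hmemL : ∀ a ∈ A, ∀ g : G, ⁅a, g⁆ ∈ L := fun a ha g => by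
    rw [hLcomm]
    exact Subgroup.commutator_mem_commutator ha (Subgroup.mem_top g)
  have hmemN : ∀ l ∈ L, ∀ g : G, ⁅l, g⁆ ∈ N := fun l hl g => by
    rw [hNcomm]
    exact Subgroup.commutator_mem_commutator hl (Subgroup.mem_top g)
  have hmemN' : ∀ g : G, ∀ l ∈ L, ⁅g, l⁆ ∈ N := by
    intro g l hl
    have h := N.inv_mem (hmemN l hl g)
    rwa [commutatorElement_inv] at h
  have hmemL' : ∀ g : G, ∀ l ∈ L, ⁅g, l⁆ ∈ L := fun g l hl => hNL (hmemN' g l hl)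
  -- generating sets
  obtain ⟨Tset, hTclos, hTfin⟩ := (Subgroup.fg_iff A).mp hA
  obtain ⟨SH, hSHclos, hSHfin⟩ := Group.fg_iff.mp hH
  set σ : H → G := Function.surjInv hsurj with hσdef
  have hσ : ∀ h : H, φ (σ h) = h := fun h => Function.surjInv_eq hsurj h
  set Sset : Set G := σ '' SH with hSdef
  have hSfin : Sset.Finite := hSHfin.image σ
  have himgS : φ '' Sset = SH := by
    rw [hSdef, Set.image_image]
    rw [Set.image_congr fun y (_ : y ∈ SH) => hσ y, Set.image_id']
  obtain ⟨Yset, hYclos, hYfin⟩ := (Subgroup.fg_iff _).mp hQ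
  have hchoice : ∀ y : H, y ∈ Yset → ∃ x, x ∈ L ∧ φ x = y := by
    intro y hy
    have h1 : y ∈ (⊤ : Subgroup H).lowerCentralSeries (m + 1) := by
      rw [← hYclos]; exact Subgroup.subset_closure hy
    rw [← lcs_map_eq φ hsurj (m + 1)] at h1
    rw [Subgroup.mem_map] at h1
    obtain ⟨x, hx, hxy⟩ := h1
    exact ⟨x, hx, hxy⟩
  choose! f hf1 hf2 using hchoice
  set MY : Set G := f '' Yset with hMYdef
  have hMYfin : MY.Finite := hYfin.image f
  set M : Subgroup G := Subgroup.closure MY with hMdef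
  have hMYL : MY ⊆ (L : Set G) := by
    rintro x ⟨y, hy, rfl⟩; exact hf1 y hy
  have hML : M ≤ L := (Subgroup.closure_le L).mpr hMYL
  have himgMY : φ '' MY = Yset := by
    rw [hMYdef, Set.image_image]
    rw [Set.image_congr fun y (hy : y ∈ Yset) => hf2 y hy, Set.image_id']
  have hMmap : M.map φ = (⊤ : Subgroup H).lowerCentralSeries (m + 1) := by
    rw [hMdef, MonoidHom.map_closure, himgMY, hYclos]
  -- decomposition of elements of L
  have hdec : ∀ l ∈ L, ∃ x ∈ M, ∃ k ∈ φ.ker, l = x * k := by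
    intro l hl
    have h1 : φ l ∈ M.map φ := by
      rw [hMmap, ← lcs_map_eq φ hsurj (m + 1)]
      exact Subgroup.mem_map_of_mem φ hl
    rw [Subgroup.mem_map] at h1
    obtain ⟨x, hx, hxl⟩ := h1
    refine ⟨x, hx, x⁻¹ * l, ?_, by group⟩
    rw [MonoidHom.mem_ker, map_mul, map_inv, hxl]
    group
  -- Step (i) : D ≤ M
  have hDM : D ≤ M := by
    rw [hDdef, Subgroup.commutator_le]
    intro l hl l' hl'
    obtain ⟨x, hx, k, hk, rfl⟩ := hdec l hl
    obtain ⟨x', hx', k', hk', rfl⟩ := hdec l' hl'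
    rw [hccL _ _ _ hk, hccR _ _ _ hk']
    rw [commutatorElement_def]
    exact M.mul_mem (M.mul_mem (M.mul_mem hx hx') (M.inv_mem hx)) (M.inv_mem hx')
  -- the subgroup generated by S ∪ ker φ is everything
  have htop : Subgroup.closure (Sset ∪ (φ.ker : Set G)) = ⊤ := by
    rw [eq_top_iff]
    intro g _
    have h1 : φ g ∈ (Subgroup.closure Sset).map φ := by
      rw [MonoidHom.map_closure, himgS, hSHclos]
      exact Subgroup.mem_top _
    rw [Subgroup.mem_map] at h1
    obtain ⟨w, hw, hwg⟩ := h1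
    have hker' : w⁻¹ * g ∈ φ.ker := by
      rw [MonoidHom.mem_ker, map_mul, map_inv, hwg]; group
    have hgw : g = w * (w⁻¹ * g) := by group
    rw [hgw]
    exact Subgroup.mul_mem _
      (Subgroup.closure_mono Set.subset_union_left hw)
      (Subgroup.subset_closure (Set.mem_union_right _ hker'))
  ---------------------------------------------------------------------------
  -- Part (ii) : N ≤ closure E2 ⊔ D, where E2 = {⁅s, y⁆ : s ∈ Sset, y ∈ MY}
  ---------------------------------------------------------------------------
  set E2 : Set G := (fun p : G × G => ⁅p.1, p.2⁆) '' (Sset ×ˢ MY) with hE2def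
  have hE2fin : E2.Finite := (hSfin.prod hMYfin).image _
  set π : G →* G ⧸ D := QuotientGroup.mk' D with hπdef
  have hπker : π.ker = D := QuotientGroup.ker_mk' D
  have hπconj : ∀ c ∈ L, ∀ x ∈ L, π (x * c * x⁻¹) = π c := by
    intro c hc x hx
    have h1 : x * c * x⁻¹ = ⁅x, c⁆ * c := by
      simp only [commutatorElement_def]; group
    have h2 : ⁅x, c⁆ ∈ D := by
      rw [hDdef]; exact Subgroup.commutator_mem_commutator hx hc
    rw [← hπker, MonoidHom.mem_ker] at h2
    rw [h1, map_mul, h2, one_mul]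
  set J : Subgroup (G ⧸ D) := Subgroup.closure (π '' E2) with hJdef
  have hb1 : ∀ s ∈ Sset, ∀ x ∈ M, π ⁅s, x⁆ ∈ J := by
    intro s hs x hx
    rw [hMdef] at hx
    induction hx using Subgroup.closure_induction with
    | mem y hy =>
      exact Subgroup.subset_closure ⟨⁅s, y⁆, ⟨(s, y), Set.mem_prod.mpr ⟨hs, hy⟩, rfl⟩, rfl⟩
    | one =>
      rw [commutatorElement_one_right, map_one]; exact J.one_mem
    | mul x y hx hy ihx ihy =>
      have hyM : y ∈ M := by rw [hMdef]; exact hy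
      have hxM : x ∈ M := by rw [hMdef]; exact hx
      have e : ⁅s, x * y⁆ = ⁅s, x⁆ * (x * ⁅s, y⁆ * x⁻¹) := by
        simp only [commutatorElement_def]; group
      rw [e, map_mul, hπconj _ (hmemL' s y (hML hyM)) x (hML hxM)]
      exact J.mul_mem ihx ihy
    | inv x hx ihx =>
      have hxM : x ∈ M := by rw [hMdef]; exact hx
      have e : ⁅s, x⁻¹⁆ = x⁻¹ * ⁅s, x⁆⁻¹ * (x⁻¹)⁻¹ := by
        simp only [commutatorElement_def]; group
      rw [e, hπconj _ (L.inv_mem (hmemL' s x (hML hxM))) x⁻¹ (L.inv_mem (hML hxM)), map_inv]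
      exact J.inv_mem ihx
  have hb2 : ∀ g : G, ∀ l ∈ L, π ⁅g, l⁆ ∈ J := by
    intro g
    have hg : g ∈ Subgroup.closure (Sset ∪ (φ.ker : Set G)) := by
      rw [htop]; exact Subgroup.mem_top g
    induction hg using Subgroup.closure_induction with
    | mem x hx =>
      intro l hl
      cases hx with
      | inl hxS =>
        obtain ⟨xm, hxm, k, hk, rfl⟩ := hdec l hl
        rw [hccR _ _ _ hk]
        exact hb1 x hxS xm hxm
      | inr hxK =>
        have h2 : ⁅x, l⁆ = 1 :=
          commutatorElement_eq_one_iff_commute.mpr ((hcent x hxK l).symm)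
        rw [h2, map_one]; exact J.one_mem
    | one =>
      intro l hl
      rw [commutatorElement_one_left, map_one]; exact J.one_mem
    | mul x y hx hy ihx ihy =>
      intro l hl
      have e : ⁅x * y, l⁆ = ⁅x, y * l * y⁻¹⁆ * ⁅y, l⁆ := by
        simp only [commutatorElement_def]; group
      rw [e, map_mul]
      exact J.mul_mem (ihx _ (hLn.conj_mem l hl y)) (ihy _ hl)
    | inv x hx ihx =>
      intro l hl
      have e : ⁅x⁻¹, l⁆ = ⁅x, x⁻¹ * l * (x⁻¹)⁻¹⁆⁻¹ := by
        simp only [commutatorElement_def]; group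
      rw [e, map_inv]
      exact J.inv_mem (ihx _ (hLn.conj_mem l hl x⁻¹))
  have hNle : N ≤ Subgroup.closure E2 ⊔ D := by
    have h4 : J.comap π = Subgroup.closure E2 ⊔ D := by
      rw [hJdef, ← MonoidHom.map_closure, Subgroup.comap_map_eq, hπker]
    rw [hNcomm, Subgroup.commutator_le]
    intro l hl g _
    rw [← h4, Subgroup.mem_comap]
    have h5 := J.inv_mem (hb2 g l hl)
    rwa [← map_inv, commutatorElement_inv] at h5
  ---------------------------------------------------------------------------
  -- Part (iii) : L ≤ closure E1 ⊔ N, where E1 = {⁅t, s⁆ : t ∈ Tset, s ∈ Sset}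
  ---------------------------------------------------------------------------
  set E1 : Set G := (fun p : G × G => ⁅p.1, p.2⁆) '' (Tset ×ˢ Sset) with hE1def
  have hE1fin : E1.Finite := (hTfin.prod hSfin).image _
  set ρ : G →* G ⧸ N := QuotientGroup.mk' N with hρdef
  have hρker : ρ.ker = N := QuotientGroup.ker_mk' N
  have hρconj : ∀ c ∈ L, ∀ x : G, ρ (x * c * x⁻¹) = ρ c := by
    intro c hc x
    have h1 : x * c * x⁻¹ = ⁅x, c⁆ * c := by
      simp only [commutatorElement_def]; group
    have h2 : ⁅x, c⁆ ∈ N := hmemN' x c hc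
    rw [← hρker, MonoidHom.mem_ker] at h2
    rw [h1, map_mul, h2, one_mul]
  set C : Subgroup (G ⧸ N) := Subgroup.closure (ρ '' E1) with hCdef
  have hc1 : ∀ a ∈ A, ∀ g : G, ρ ⁅a, g⁆ ∈ C := by
    intro a ha
    rw [← hTclos] at ha
    induction ha using Subgroup.closure_induction with
    | mem t ht =>
      intro g
      have hg : g ∈ Subgroup.closure (Sset ∪ (φ.ker : Set G)) := by
        rw [htop]; exact Subgroup.mem_top g
      induction hg using Subgroup.closure_induction with
      | mem x hx =>
        cases hx with
        | inl hxS =>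
          exact Subgroup.subset_closure ⟨⁅t, x⁆, ⟨(t, x), Set.mem_prod.mpr ⟨ht, hxS⟩, rfl⟩, rfl⟩
        | inr hxK =>
          have h2 : ⁅t, x⁆ = 1 :=
            commutatorElement_eq_one_iff_commute.mpr (hcent x hxK t)
          rw [h2, map_one]; exact C.one_mem
      | one =>
        rw [commutatorElement_one_right, map_one]; exact C.one_mem
      | mul x y hx hy ihx ihy =>
        have htA : t ∈ A := by rw [← hTclos]; exact Subgroup.subset_closure ht
        have e : ⁅t, x * y⁆ = ⁅t, x⁆ * (x * ⁅t, y⁆ * x⁻¹) := by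
          simp only [commutatorElement_def]; group
        rw [e, map_mul, hρconj _ (hmemL t htA y) x]
        exact C.mul_mem ihx ihy
      | inv x hx ihx =>
        have htA : t ∈ A := by rw [← hTclos]; exact Subgroup.subset_closure ht
        have e : ⁅t, x⁻¹⁆ = x⁻¹ * ⁅t, x⁆⁻¹ * (x⁻¹)⁻¹ := by
          simp only [commutatorElement_def]; group
        rw [e, hρconj _ (L.inv_mem (hmemL t htA x)) x⁻¹, map_inv]
        exact C.inv_mem ihx
    | one =>
      intro g
      rw [commutatorElement_one_left, map_one]; exact C.one_mem
    | mul a b ha hb iha ihb =>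
      intro g
      have hbA : b ∈ A := by rw [← hTclos]; exact hb
      have e : ⁅a * b, g⁆ = (a * ⁅b, g⁆ * a⁻¹) * ⁅a, g⁆ := by
        simp only [commutatorElement_def]; group
      rw [e, map_mul, hρconj _ (hmemL b hbA g) a]
      exact C.mul_mem (ihb g) (iha g)
    | inv a ha iha =>
      intro g
      have haA : a ∈ A := by rw [← hTclos]; exact ha
      have e : ⁅a⁻¹, g⁆ = a⁻¹ * ⁅a, g⁆⁻¹ * (a⁻¹)⁻¹ := by
        simp only [commutatorElement_def]; group
      rw [e, hρconj _ (L.inv_mem (hmemL a haA g)) a⁻¹, map_inv]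
      exact C.inv_mem (iha g)
  have hLle : L ≤ Subgroup.closure E1 ⊔ N := by
    have h4 : C.comap ρ = Subgroup.closure E1 ⊔ N := by
      rw [hCdef, ← MonoidHom.map_closure, Subgroup.comap_map_eq, hρker]
    rw [hLcomm, Subgroup.commutator_le]
    intro a ha g _
    rw [← h4, Subgroup.mem_comap]
    exact hc1 a ha g
  ---------------------------------------------------------------------------
  -- Assembling
  ---------------------------------------------------------------------------
  have hfinal : L = Subgroup.closure (E1 ∪ E2 ∪ MY) := by
    apply le_antisymm
    · have h1 : Subgroup.closure (E1 ∪ E2 ∪ MY)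
          = Subgroup.closure E1 ⊔ (Subgroup.closure E2 ⊔ M) := by
        rw [Subgroup.closure_union, Subgroup.closure_union, hMdef, sup_assoc]
      rw [h1]
      calc L ≤ Subgroup.closure E1 ⊔ N := hLle
        _ ≤ Subgroup.closure E1 ⊔ (Subgroup.closure E2 ⊔ D) :=
            sup_le_sup_left hNle _
        _ ≤ Subgroup.closure E1 ⊔ (Subgroup.closure E2 ⊔ M) :=
            sup_le_sup_left (sup_le_sup_left hDM _) _
    · rw [Subgroup.closure_le]
      intro x hx
      rcases hx with (hx | hx) | hx
      · obtain ⟨⟨t, s⟩, hts, rfl⟩ := hx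
        have ht : t ∈ A := by
          rw [← hTclos]; exact Subgroup.subset_closure (Set.mem_prod.mp hts).1
        exact hmemL t ht s
      · obtain ⟨⟨s, y⟩, hsy, rfl⟩ := hx
        exact hmemL' s y (hMYL (Set.mem_prod.mp hsy).2)
      · exact hMYL hx
  exact (Subgroup.fg_iff L).mpr ⟨E1 ∪ E2 ∪ MY, hfinal.symm, (hE1fin.union hE2fin).union hMYfin⟩

/-- Let `H` be a finitely generated group and `G` a central extension of `H`. Fix `n ≥ 1` and
suppose that the lower central series term `γₙ(G)` is finitely generated. Then `γ_{n+1}(G)` is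
finitely generated if and only if `γ_{n+1}(H)` is finitely generated.
(Here `γₙ = lowerCentralSeries · (n - 1)`, since Mathlib's lower central series starts at
index `0`; thus `γ_{n+1} = lowerCentralSeries · n`.) -/
theorem lowerCentralSeries_succ_fg_iff_of_central_extension
    {G H : Type*} [Group G] [Group H] (φ : G →* H)
    (hsurj : Function.Surjective φ) (hker : φ.ker ≤ Subgroup.center G)
    (hH : Group.FG H) (n : ℕ) (hn : 1 ≤ n)
    (hfg : ((⊤ : Subgroup G).lowerCentralSeries (n - 1)).FG) :
    ((⊤ : Subgroup G).lowerCentralSeries n).FG ↔ ((⊤ : Subgroup H).lowerCentralSeries n).FG := by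
  obtain ⟨m, rfl⟩ : ∃ m, n = m + 1 := ⟨n - 1, by omega⟩
  have hfg' : ((⊤ : Subgroup G).lowerCentralSeries m).FG := by simpa using hfg
  constructor
  · intro h
    obtain ⟨P, hP, hPfin⟩ := (Subgroup.fg_iff _).mp h
    refine (Subgroup.fg_iff _).mpr ⟨φ '' P, ?_, hPfin.image φ⟩
    rw [← MonoidHom.map_closure, hP]
    exact lcs_map_eq φ hsurj (m + 1)
  · intro h
    exact backward_fg φ hsurj hker hH m hfg' h
end

section
/- Let H be a finitely generated group, and let G be a group with a surjective group homomorphism φ : G → H whose kernel is contained in the center of G (i.e., G is a central extension of H). Then every term γₙ(H) with n ≥ 2 of the lower central series of H is finitely generated if and only if every term γₙ(G) with n ≥ 2 of the lower central series of G is finitely generated. -/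
open scoped commutatorElement

section CentralExtensionLCS

variable {G H : Type*} [Group G] [Group H]

private lemma conj_central_aux {z m : G} (hz : ∀ g : G, g * z = z * g) (x : G) :
    (z * m) * x * (z * m)⁻¹ = m * x * m⁻¹ := by
  have h2 : (z * m) * x * (z * m)⁻¹ = z * (m * x * m⁻¹) * z⁻¹ := by group
  rw [h2, ← hz (m * x * m⁻¹), mul_inv_cancel_right]

private lemma commutator_central_left {z m : G} (hz : ∀ g : G, g * z = z * g) (w : G) :
    ⁅z * m, w⁆ = ⁅m, w⁆ := by
  have h1 := conj_central_aux (m := m) hz w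
  calc ⁅z * m, w⁆ = ((z * m) * w * (z * m)⁻¹) * w⁻¹ := by
        rw [commutatorElement_def]
    _ = (m * w * m⁻¹) * w⁻¹ := by rw [h1]
    _ = ⁅m, w⁆ := by rw [commutatorElement_def]

private lemma commutator_central_both {z z' m n : G} (hz : ∀ g : G, g * z = z * g)
    (hz' : ∀ g : G, g * z' = z' * g) : ⁅z * m, z' * n⁆ = ⁅m, n⁆ := by
  rw [commutator_central_left hz, ← commutatorElement_inv,
    commutator_central_left hz', commutatorElement_inv]

/-- Key lemma: a finite subset `T` of a normal subgroup `Γ` whose image generates a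
normal subgroup `K` of `H` can be enlarged by finitely many central defect elements to a
finitely generated *normal* subgroup `N` of `G` with `N ≤ Γ` and `φ(N) = K`. -/
private lemma lemmaA (φ : G →* H) (hker : φ.ker ≤ Subgroup.center G)
    (S : Set G) (hSfin : S.Finite) (hStop : Subgroup.closure (φ '' S) = ⊤)
    (T : Set G) (hTfin : T.Finite)
    (Γ : Subgroup G) (hΓ : Γ.Normal) (hTΓ : T ⊆ Γ)
    (K : Subgroup H) (hKn : K.Normal) (hK : Subgroup.closure (φ '' T) = K) :
    ∃ N : Subgroup G, N.FG ∧ N.Normal ∧ N ≤ Γ ∧ Subgroup.map φ N = K ∧ T ⊆ N := by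
  classical
  set S' : Set G := S ∪ (fun a => a⁻¹) '' S with hS'
  have hT_img_K : ∀ y ∈ T, φ y ∈ K := by
    intro y hy
    rw [← hK]
    exact Subgroup.subset_closure (Set.mem_image_of_mem φ hy)
  have hcond : ∀ y ∈ T, ∀ a : G, φ (a * y * a⁻¹) ∈ Subgroup.map φ (Subgroup.closure T) := by
    intro y hy a
    have h1 : Subgroup.map φ (Subgroup.closure T) = K := by
      rw [MonoidHom.map_closure, hK]
    rw [h1]
    have h3 := hKn.conj_mem _ (hT_img_K y hy) (φ a)
    simpa [map_mul, map_inv] using h3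
  have hwex : ∀ y a : G, ∃ u, u ∈ Subgroup.closure T ∧
      (y ∈ T → φ u = φ (a * y * a⁻¹)) := by
    intro y a
    by_cases hy : y ∈ T
    · obtain ⟨u, hu1, hu2⟩ := Subgroup.mem_map.mp (hcond y hy a)
      exact ⟨u, hu1, fun _ => hu2⟩
    · exact ⟨1, one_mem _, fun h => absurd h hy⟩
  choose w hw1 hw2 using hwex
  set X : Set G := Set.image2 (fun y a => a * y * a⁻¹ * (w y a)⁻¹) T S' with hX
  have hXfin : X.Finite := hTfin.image2 _ (hSfin.union (hSfin.image _))
  have hXker : ∀ x ∈ X, x ∈ φ.ker := by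
    rintro x ⟨y, hy, a, ha, rfl⟩
    rw [MonoidHom.mem_ker, map_mul, map_inv, hw2 y a hy, mul_inv_cancel]
  set N : Subgroup G := Subgroup.closure (T ∪ X) with hN
  have hTN : T ⊆ N := fun y hy => Subgroup.subset_closure (Or.inl hy)
  have hfg : N.FG := (Subgroup.fg_iff N).mpr ⟨T ∪ X, rfl, hTfin.union hXfin⟩
  have hNΓ : N ≤ Γ := by
    rw [hN, Subgroup.closure_le]
    rintro x (hx | hx)
    · exact hTΓ hx
    · obtain ⟨y, hy, a, ha, rfl⟩ := hx
      exact mul_mem (hΓ.conj_mem y (hTΓ hy) a)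
        (inv_mem ((Subgroup.closure_le Γ).mpr hTΓ (hw1 y a)))
  have hmapN : Subgroup.map φ N = K := by
    rw [hN, MonoidHom.map_closure]
    apply le_antisymm
    · rw [Subgroup.closure_le]
      rintro b ⟨x, hx, rfl⟩
      rcases hx with hx | hx
      · exact hT_img_K x hx
      · have h1 := hXker x hx
        rw [MonoidHom.mem_ker] at h1
        rw [SetLike.mem_coe, h1]
        exact one_mem K
    · rw [← hK]
      exact Subgroup.closure_mono (Set.image_mono Set.subset_union_left)
  have hcentral : ∀ x, x ∈ φ.ker → ∀ g : G, g * x * g⁻¹ = x := by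
    intro x hx g
    have h1 := Subgroup.mem_center_iff.mp (hker hx) g
    rw [h1, mul_assoc, mul_inv_cancel, mul_one]
  have key : ∀ a ∈ S', ∀ x ∈ N, a * x * a⁻¹ ∈ N := by
    intro a ha x hx
    rw [hN] at hx
    induction hx using Subgroup.closure_induction with
    | mem y hy =>
      rcases hy with hy | hy
      · have heq : a * y * a⁻¹ = (a * y * a⁻¹ * (w y a)⁻¹) * w y a := by
          rw [inv_mul_cancel_right]
        rw [heq]
        exact mul_mem (Subgroup.subset_closure (Or.inr (Set.mem_image2_of_mem hy ha)))
          (Subgroup.closure_mono Set.subset_union_left (hw1 y a))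
      · rw [hcentral y (hXker y hy) a]
        exact Subgroup.subset_closure (Or.inr hy)
    | one => simpa using one_mem N
    | mul u v hu hv ihu ihv =>
      have h1 : a * (u * v) * a⁻¹ = (a * u * a⁻¹) * (a * v * a⁻¹) := by group
      rw [h1]; exact mul_mem ihu ihv
    | inv u hu ihu =>
      have h1 : a * u⁻¹ * a⁻¹ = (a * u * a⁻¹)⁻¹ := by group
      rw [h1]; exact inv_mem ihu
  have conjS : ∀ c ∈ Subgroup.closure S,
      (∀ x ∈ N, c * x * c⁻¹ ∈ N) ∧ (∀ x ∈ N, c⁻¹ * x * c ∈ N) := by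
    intro c hc
    induction hc using Subgroup.closure_induction with
    | mem s hs =>
      constructor
      · exact fun x hx => key s (Or.inl hs) x hx
      · intro x hx
        have h1 := key s⁻¹ (Or.inr ⟨s, hs, rfl⟩) x hx
        simpa using h1
    | one => exact ⟨fun x hx => by simpa using hx, fun x hx => by simpa using hx⟩
    | mul u v hu hv ihu ihv =>
      constructor
      · intro x hx
        have h1 : (u * v) * x * (u * v)⁻¹ = u * (v * x * v⁻¹) * u⁻¹ := by group
        rw [h1]; exact ihu.1 _ (ihv.1 x hx)
      · intro x hx
        have h1 : (u * v)⁻¹ * x * (u * v) = v⁻¹ * (u⁻¹ * x * u) * v := by group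
        rw [h1]; exact ihv.2 _ (ihu.2 x hx)
    | inv u hu ihu =>
      constructor
      · intro x hx; simpa using ihu.2 x hx
      · intro x hx; simpa using ihu.1 x hx
  have hNormal : N.Normal := by
    constructor
    intro x hx g
    have hφg : φ g ∈ Subgroup.map φ (Subgroup.closure S) := by
      rw [MonoidHom.map_closure, hStop]
      trivial
    obtain ⟨c, hc, hφc⟩ := Subgroup.mem_map.mp hφg
    have hz : g * c⁻¹ ∈ φ.ker := by
      rw [MonoidHom.mem_ker, map_mul, map_inv, hφc, mul_inv_cancel]
    have h2 := conj_central_aux (z := g * c⁻¹) (m := c)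
      (fun g' => Subgroup.mem_center_iff.mp (hker hz) g') x
    rw [inv_mul_cancel_right] at h2
    rw [h2]
    exact (conjS c hc).1 x hx
  exact ⟨N, hfg, hNormal, hNΓ, hmapN, hTN⟩

private lemma map_lcs (φ : G →* H) (hsurj : Function.Surjective φ) (n : ℕ) :
    ((⊤ : Subgroup G).lowerCentralSeries n).map φ = (⊤ : Subgroup H).lowerCentralSeries n := by
  induction n with
  | zero => simpa using Subgroup.map_top_of_surjective φ hsurj
  | succ n ih =>
    have h1 : (⊤ : Subgroup G).lowerCentralSeries (n + 1) = ⁅(⊤ : Subgroup G).lowerCentralSeries n, (⊤ : Subgroup G)⁆ := rfl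
    have h2 : (⊤ : Subgroup H).lowerCentralSeries (n + 1) = ⁅(⊤ : Subgroup H).lowerCentralSeries n, (⊤ : Subgroup H)⁆ := rfl
    rw [h1, h2, Subgroup.map_commutator, ih, Subgroup.map_top_of_surjective φ hsurj]

end CentralExtensionLCS

/-- Let `H` be a finitely generated group and `G` a central extension of `H`. Then every term
`γₙ(H)` with `n ≥ 2` of the lower central series of `H` is finitely generated if and only if
every term `γₙ(G)` with `n ≥ 2` of the lower central series of `G` is finitely generated.
(Here `γₙ = lowerCentralSeries · (n - 1)`, since Mathlib's lower central series starts at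
index `0`.) -/
theorem lowerCentralSeries_fg_iff_of_central_extension
    {G H : Type*} [Group G] [Group H] (φ : G →* H)
    (hsurj : Function.Surjective φ) (hker : φ.ker ≤ Subgroup.center G)
    (hH : Group.FG H) :
    (∀ n : ℕ, 2 ≤ n → ((⊤ : Subgroup H).lowerCentralSeries (n - 1)).FG) ↔
      (∀ n : ℕ, 2 ≤ n → ((⊤ : Subgroup G).lowerCentralSeries (n - 1)).FG) := by
  constructor
  · -- hard direction
    intro hfgH
    -- fixed lifted generating set of `H`
    obtain ⟨Sb, hSbtop, hSbfin⟩ := Group.fg_iff.mp hH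
    obtain ⟨ℓ, hℓ⟩ := Function.Surjective.hasRightInverse hsurj
    set S : Set G := ℓ '' Sb with hS
    have hSfin : S.Finite := hSbfin.image _
    have hStop : Subgroup.closure (φ '' S) = ⊤ := by
      have h1 : φ '' S = Sb := by
        ext b
        simp only [hS, Set.mem_image]
        constructor
        · rintro ⟨x, ⟨c, hc, rfl⟩, rfl⟩
          rw [hℓ]; exact hc
        · intro hb; exact ⟨ℓ b, ⟨b, hb, rfl⟩, hℓ b⟩
      rw [h1, hSbtop]
    -- base finitely generated subgroup with full image
    obtain ⟨N₀, hN₀fg, -, -, hN₀map, -⟩ :=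
      lemmaA φ hker S hSfin hStop S hSfin ⊤ inferInstance (fun _ _ => trivial) ⊤
        inferInstance (by rw [hStop])
    obtain ⟨T₀, hT₀cl, hT₀fin⟩ := (Subgroup.fg_iff _).mp hN₀fg
    -- main induction
    have main : ∀ k : ℕ, ∃ N : Subgroup G, N.FG ∧ N ≤ (⊤ : Subgroup G).lowerCentralSeries k ∧
        Subgroup.map φ N = (⊤ : Subgroup H).lowerCentralSeries k ∧
        (k ≠ 0 → (⊤ : Subgroup G).lowerCentralSeries k ≤ N) := by
      intro k
      induction k with
      | zero =>
        exact ⟨N₀, hN₀fg, le_top, by simpa using hN₀map, fun h => absurd rfl h⟩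
      | succ j ih =>
        obtain ⟨Nj, hNjfg, hNjle, hNjmap, -⟩ := ih
        obtain ⟨Tj, hTjcl, hTjfin⟩ := (Subgroup.fg_iff _).mp hNjfg
        have hdefG : (⊤ : Subgroup G).lowerCentralSeries (j + 1)
            = ⁅(⊤ : Subgroup G).lowerCentralSeries j, (⊤ : Subgroup G)⁆ := rfl
        have hdefH : (⊤ : Subgroup H).lowerCentralSeries (j + 1)
            = ⁅(⊤ : Subgroup H).lowerCentralSeries j, (⊤ : Subgroup H)⁆ := rfl
        have hfgHj : ((⊤ : Subgroup H).lowerCentralSeries (j + 1)).FG := by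
          have h1 := hfgH (j + 2) (by omega)
          simpa using h1
        obtain ⟨F, hFcl, hFfin⟩ := (Subgroup.fg_iff _).mp hfgHj
        -- lifts of the generators `F` inside `(⊤ : Subgroup G).lowerCentralSeries (j+1)`
        have hex : ∀ f : H, ∃ x : G, f ∈ (⊤ : Subgroup H).lowerCentralSeries (j + 1) →
            x ∈ (⊤ : Subgroup G).lowerCentralSeries (j + 1) ∧ φ x = f := by
          intro f
          by_cases hf : f ∈ (⊤ : Subgroup H).lowerCentralSeries (j + 1)
          · have h1 : f ∈ ((⊤ : Subgroup G).lowerCentralSeries (j + 1)).map φ := by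
              rw [map_lcs φ hsurj]; exact hf
            obtain ⟨x, hx1, hx2⟩ := Subgroup.mem_map.mp h1
            exact ⟨x, fun _ => ⟨hx1, hx2⟩⟩
          · exact ⟨1, fun h => absurd h hf⟩
        choose xf hxf using hex
        have hFmem : ∀ f ∈ F, f ∈ (⊤ : Subgroup H).lowerCentralSeries (j + 1) := by
          intro f hf
          rw [← hFcl]; exact Subgroup.subset_closure hf
        set T1 : Set G :=
          (Set.image2 (fun q p => ⁅q, p⁆) Tj T₀) ∪ (xf '' F) with hT1
        have hT1fin : T1.Finite := (hTjfin.image2 _ hT₀fin).union (hFfin.image _)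
        have hTjmem : ∀ q ∈ Tj, q ∈ Nj := by
          intro q hq; rw [← hTjcl]; exact Subgroup.subset_closure hq
        have hT1sub : T1 ⊆ ((⊤ : Subgroup G).lowerCentralSeries (j + 1) : Subgroup G) := by
          rintro x (hx | hx)
          · obtain ⟨q, hq, p, hp, rfl⟩ := hx
            have hq' : q ∈ (⊤ : Subgroup G).lowerCentralSeries j := hNjle (hTjmem q hq)
            rw [SetLike.mem_coe, hdefG]
            exact Subgroup.commutator_mem_commutator hq' (Subgroup.mem_top p)
          · obtain ⟨f, hf, rfl⟩ := hx
            exact (hxf f (hFmem f hf)).1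
        have hT1img : Subgroup.closure (φ '' T1) = (⊤ : Subgroup H).lowerCentralSeries (j + 1) := by
          apply le_antisymm
          · rw [Subgroup.closure_le]
            rintro b ⟨x, hx, rfl⟩
            rcases hx with hx | hx
            · obtain ⟨q, hq, p, hp, rfl⟩ := hx
              have hq' : φ q ∈ (⊤ : Subgroup H).lowerCentralSeries j := by
                rw [← hNjmap]
                exact ⟨q, hTjmem q hq, rfl⟩
              rw [SetLike.mem_coe, map_commutatorElement, hdefH]
              exact Subgroup.commutator_mem_commutator hq' (Subgroup.mem_top _)
            · obtain ⟨f, hf, rfl⟩ := hx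
              rw [SetLike.mem_coe, (hxf f (hFmem f hf)).2]
              exact hFmem f hf
          · conv_lhs => rw [← hFcl]
            apply Subgroup.closure_mono
            intro f hf
            exact ⟨xf f, Or.inr ⟨f, hf, rfl⟩, (hxf f (hFmem f hf)).2⟩
        obtain ⟨N', hN'fg, hN'norm, hN'le, hN'map, hT1N'⟩ :=
          lemmaA φ hker S hSfin hStop T1 hT1fin ((⊤ : Subgroup G).lowerCentralSeries (j + 1))
            inferInstance hT1sub ((⊤ : Subgroup H).lowerCentralSeries (j + 1)) inferInstance hT1img
        refine ⟨N', hN'fg, hN'le, hN'map, fun _ => ?_⟩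
        -- `⁅m, p⁆ ∈ N'` for `m ∈ Nj`, `p ∈ N₀`
        have basic : ∀ q ∈ Tj, ∀ p ∈ T₀, ⁅q, p⁆ ∈ N' := fun q hq p hp =>
          hT1N' (Or.inl (Set.mem_image2_of_mem hq hp))
        have hC : ∀ m ∈ Subgroup.closure Tj, ∀ p ∈ Subgroup.closure T₀, ⁅m, p⁆ ∈ N' := by
          intro m hm
          induction hm using Subgroup.closure_induction with
          | mem q hq =>
            intro p hp
            induction hp using Subgroup.closure_induction with
            | mem t ht => exact basic q hq t ht
            | one => simpa using one_mem N'
            | mul v₁ v₂ hv₁ hv₂ ih₁ ih₂ =>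
              have h1 : ⁅q, v₁ * v₂⁆ = ⁅q, v₁⁆ * (v₁ * ⁅q, v₂⁆ * v₁⁻¹) := by
                simp only [commutatorElement_def]; group
              rw [h1]; exact mul_mem ih₁ (hN'norm.conj_mem _ ih₂ v₁)
            | inv v hv ihv =>
              have h1 : ⁅q, v⁻¹⁆ = v⁻¹ * ⁅q, v⁆⁻¹ * v := by
                simp only [commutatorElement_def]; group
              rw [h1]
              simpa using hN'norm.conj_mem _ (inv_mem ihv) v⁻¹
          | one =>
            intro p hp; simpa using one_mem N'
          | mul u₁ u₂ hu₁ hu₂ ih₁ ih₂ =>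
            intro p hp
            have h1 : ⁅u₁ * u₂, p⁆ = (u₁ * ⁅u₂, p⁆ * u₁⁻¹) * ⁅u₁, p⁆ := by
              simp only [commutatorElement_def]; group
            rw [h1]; exact mul_mem (hN'norm.conj_mem _ (ih₂ p hp) u₁) (ih₁ p hp)
          | inv u hu ihu =>
            intro p hp
            have h1 : ⁅u⁻¹, p⁆ = u⁻¹ * ⁅u, p⁆⁻¹ * u := by
              simp only [commutatorElement_def]; group
            rw [h1]
            simpa using hN'norm.conj_mem _ (inv_mem (ihu p hp)) u⁻¹
        -- the crux: `(⊤ : Subgroup G).lowerCentralSeries (j+1) ≤ N'`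
        rw [hdefG, Subgroup.commutator_le]
        intro x hx g hg
        have hφx : φ x ∈ Subgroup.map φ Nj := by
          rw [hNjmap, ← map_lcs φ hsurj j]
          exact ⟨x, hx, rfl⟩
        obtain ⟨m, hm, hφm⟩ := Subgroup.mem_map.mp hφx
        have hφg : φ g ∈ Subgroup.map φ N₀ := by rw [hN₀map]; trivial
        obtain ⟨p, hp, hφp⟩ := Subgroup.mem_map.mp hφg
        have hz1 : x * m⁻¹ ∈ φ.ker := by
          rw [MonoidHom.mem_ker, map_mul, map_inv, hφm, mul_inv_cancel]
        have hz2 : g * p⁻¹ ∈ φ.ker := by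
          rw [MonoidHom.mem_ker, map_mul, map_inv, hφp, mul_inv_cancel]
        have hcomm := commutator_central_both (z := x * m⁻¹) (z' := g * p⁻¹) (m := m) (n := p)
          (fun g' => Subgroup.mem_center_iff.mp (hker hz1) g')
          (fun g' => Subgroup.mem_center_iff.mp (hker hz2) g')
        rw [inv_mul_cancel_right, inv_mul_cancel_right] at hcomm
        rw [hcomm]
        exact hC m (by rw [hTjcl]; exact hm) p (by rw [hT₀cl]; exact hp)
    intro n hn
    obtain ⟨N, hfg, hle, -, hge⟩ := main (n - 1)
    have h1 : (⊤ : Subgroup G).lowerCentralSeries (n - 1) = N := le_antisymm (hge (by omega)) hle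
    rw [h1]; exact hfg
  · -- easy direction
    intro hfgG n hn
    obtain ⟨T, hTcl, hTfin⟩ := (Subgroup.fg_iff _).mp (hfgG n hn)
    rw [← map_lcs φ hsurj (n - 1)]
    exact (Subgroup.fg_iff _).mpr
      ⟨φ '' T, by rw [← MonoidHom.map_closure, hTcl], hTfin.image _⟩
end

section
/- Let H be a Noetherian group, and let G be a group with a surjective group homomorphism φ : G → H whose kernel is contained in the center of G (i.e., G is a central extension of H). Then the lower central series term γₙ(G) is finitely generated for every n ≥ 2. -/
open scoped commutatorElement


section Aux

variable {G H : Type*} [Group G] [Group H]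

open Subgroup

/-- Cancel a central element on the left entry of a commutator. -/
private lemma comm_cancel_left (u b z : G) (hz : ∀ g : G, z * g = g * z) :
    ⁅u * z, b⁆ = ⁅u, b⁆ := by
  have hb : z * b * z⁻¹ = b := by rw [hz b]; group
  calc ⁅u * z, b⁆ = u * (z * b * z⁻¹) * u⁻¹ * b⁻¹ := by
        simp only [commutatorElement_def]; group
    _ = u * b * u⁻¹ * b⁻¹ := by rw [hb]
    _ = ⁅u, b⁆ := by simp only [commutatorElement_def]

/-- Cancel a central element on the right entry of a commutator. -/
private lemma comm_cancel_right (a e k : G) (hk : ∀ g : G, k * g = g * k) :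
    ⁅a, e * k⁆ = ⁅a, e⁆ := by
  have ha : k * a⁻¹ * k⁻¹ = a⁻¹ := by rw [hk a⁻¹]; group
  calc ⁅a, e * k⁆ = a * e * (k * a⁻¹ * k⁻¹) * e⁻¹ := by
        simp only [commutatorElement_def]; group
    _ = a * e * a⁻¹ * e⁻¹ := by rw [ha]
    _ = ⁅a, e⁆ := by simp only [commutatorElement_def]

/-- In a Noetherian quotient situation, every subgroup `W` of `G` admits a finitely
generated subgroup `U ≤ W` covering `W` modulo the kernel. -/
private lemma exists_fg_cover (φ : G →* H) (hH : IsNoetherianGroup H) (W : Subgroup G) :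
    ∃ U : Subgroup G, U.FG ∧ U ≤ W ∧ ∀ w ∈ W, ∃ u ∈ U, u⁻¹ * w ∈ φ.ker := by
  obtain ⟨S, hS⟩ := hH (W.map φ)
  have hmem : ∀ s ∈ (S : Set H), ∃ g, g ∈ W ∧ φ g = s := by
    intro s hs
    have : s ∈ W.map φ := by
      rw [← hS]; exact Subgroup.subset_closure hs
    obtain ⟨g, hg, hgs⟩ := this
    exact ⟨g, hg, hgs⟩
  choose f hfW hfφ using hmem
  haveI : Finite (S : Set H) := Set.Finite.to_subtype S.finite_toSet
  set T : Set G := Set.range (fun p : (S : Set H) => f p p.2) with hT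
  refine ⟨Subgroup.closure T, ?_, ?_, ?_⟩
  · exact (Subgroup.fg_iff _).2 ⟨T, rfl, Set.finite_range _⟩
  · rw [Subgroup.closure_le]
    rintro x ⟨p, rfl⟩
    exact hfW p p.2
  · intro w hw
    have hφw : φ w ∈ Subgroup.closure (S : Set H) := by
      rw [hS]; exact ⟨w, hw, rfl⟩
    have hle : Subgroup.closure (S : Set H) ≤ (Subgroup.closure T).map φ := by
      rw [Subgroup.closure_le]
      intro s hs
      exact ⟨f s hs, Subgroup.subset_closure ⟨⟨s, hs⟩, rfl⟩, hfφ s hs⟩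
    obtain ⟨u, hu, huw⟩ := hle hφw
    refine ⟨u, hu, ?_⟩
    rw [MonoidHom.mem_ker, map_mul, map_inv, huw, inv_mul_cancel]

/-- The commutator of two closures is contained in the normal closure of the
commutators of the generators. -/
private lemma commutator_closure_le_normalClosure (SU SE : Set G) :
    ⁅Subgroup.closure SU, Subgroup.closure SE⁆ ≤
      Subgroup.normalClosure {x | ∃ s ∈ SU, ∃ t ∈ SE, x = ⁅s, t⁆} := by
  set N := Subgroup.normalClosure {x | ∃ s ∈ SU, ∃ t ∈ SE, x = ⁅s, t⁆} with hN
  rw [Subgroup.commutator_le]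
  intro a ha
  induction ha using Subgroup.closure_induction with
  | mem s hs =>
      intro b hb
      induction hb using Subgroup.closure_induction with
      | mem t ht => exact Subgroup.subset_normalClosure ⟨s, hs, t, ht, rfl⟩
      | one => simpa using one_mem N
      | mul x y hx hy hsx hsy =>
          have hid : ⁅s, x * y⁆ = ⁅s, x⁆ * (x * ⁅s, y⁆ * x⁻¹) := by
            simp only [commutatorElement_def]; group
          rw [hid]
          exact mul_mem hsx (Subgroup.normalClosure_normal.conj_mem _ hsy x)
      | inv x hx hsx =>
          have hid : ⁅s, x⁻¹⁆ = x⁻¹ * ⁅s, x⁆⁻¹ * x⁻¹⁻¹ := by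
            simp only [commutatorElement_def]; group
          rw [hid]
          exact Subgroup.normalClosure_normal.conj_mem _ (inv_mem hsx) x⁻¹
  | one => intro b hb; simpa using one_mem N
  | mul x y hx hy hxN hyN =>
      intro b hb
      have hid : ⁅x * y, b⁆ = (x * ⁅y, b⁆ * x⁻¹) * ⁅x, b⁆ := by
        simp only [commutatorElement_def]; group
      rw [hid]
      exact mul_mem (Subgroup.normalClosure_normal.conj_mem _ (hyN b hb) x) (hxN b hb)
  | inv x hx hxN =>
      intro b hb
      have hid : ⁅x⁻¹, b⁆ = x⁻¹ * ⁅x, b⁆⁻¹ * x⁻¹⁻¹ := by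
        simp only [commutatorElement_def]; group
      rw [hid]
      exact Subgroup.normalClosure_normal.conj_mem _ (inv_mem (hxN b hb)) x⁻¹

/-- The key "abelian trap": a normal abelian subgroup of `Q` which is the normal closure
of a finite set is finitely generated, provided we have a central subgroup `Kc` so that a
finitely generated set covers the whole group modulo `Kc`, and a finite set inside `Wb`
covers `Wb` modulo `Kc`. -/
private lemma abelian_trap {Q : Type*} [Group Q] (Wb : Subgroup Q) (hWbN : Wb.Normal)
    (hab : ∀ x ∈ Wb, ∀ y ∈ Wb, x * y = y * x)
    (Kc : Subgroup Q) (hcen : ∀ z ∈ Kc, ∀ g : Q, z * g = g * z)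
    (X : Set Q) (hXW : X ⊆ Wb) (hXfin : X.Finite)
    (hWX : Wb = Subgroup.normalClosure X)
    (L : Set Q) (hLfin : L.Finite) (hLsym : ∀ v ∈ L, v⁻¹ ∈ L)
    (hEcov : ∀ g : Q, ∃ e ∈ Subgroup.closure L, e⁻¹ * g ∈ Kc)
    (SU : Set Q) (hSUfin : SU.Finite) (hSUW : SU ⊆ Wb)
    (hUcov : ∀ w ∈ Wb, ∃ u ∈ Subgroup.closure SU, u⁻¹ * w ∈ Kc) :
    Wb.FG := by
  -- basic facts
  have hUleW : Subgroup.closure SU ≤ Wb := (Subgroup.closure_le _).2 hSUW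
  have hWcomm : ∀ (g y : Q), y ∈ Wb → ⁅g, y⁆ ∈ Wb := by
    intro g y hy
    have : ⁅g, y⁆ = (g * y * g⁻¹) * y⁻¹ := by simp only [commutatorElement_def]
    rw [this]
    exact mul_mem (hWbN.conj_mem y hy g) (inv_mem hy)
  have hF2 : ∀ (g x y : Q), x ∈ Wb → y ∈ Wb → ⁅g, x * y⁆ = ⁅g, x⁆ * ⁅g, y⁆ := by
    intro g x y hx hy
    have hid : ⁅g, x * y⁆ = ⁅g, x⁆ * (x * ⁅g, y⁆ * x⁻¹) := by
      simp only [commutatorElement_def]; group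
    rw [hid]
    have h1 : x * ⁅g, y⁆ = ⁅g, y⁆ * x := hab x hx _ (hWcomm g y hy)
    rw [mul_assoc x, ← mul_assoc x, h1]
    group
  have hF3 : ∀ (g z : Q), z ∈ Kc → ⁅g, z⁆ = 1 := by
    intro g z hz
    exact commutatorElement_eq_one_iff_mul_comm.2 (hcen z hz g).symm
  have hFinv : ∀ (g x : Q), x ∈ Wb → ⁅g, x⁻¹⁆ = ⁅g, x⁆⁻¹ := by
    intro g x hx
    have h2 : ⁅g, x⁆ * ⁅g, x⁻¹⁆ = 1 := by
      rw [← hF2 g x x⁻¹ hx (inv_mem hx)]; simp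
    exact (inv_eq_of_mul_eq_one_right h2).symm
  -- the finitely generated trap D
  set Y : Set Q := Set.image2 (fun v u => ⁅v, u⁆) L SU with hY
  set D := Subgroup.closure (X ∪ Y) with hD
  have hDfg : D.FG := (Subgroup.fg_iff _).2 ⟨X ∪ Y, rfl, hXfin.union (Set.Finite.image2 _ hLfin hSUfin)⟩
  have hDW : D ≤ Wb := by
    rw [hD, Subgroup.closure_le]
    rintro x (hx | hx)
    · exact hXW hx
    · obtain ⟨v, hv, u, hu, rfl⟩ := hx
      exact hWcomm v u (hSUW hu)
  -- Claim A : commutators of elements of L (fixed) with arbitrary elements of Wb lie in D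
  have claimA : ∀ v ∈ L, ∀ w ∈ Wb, ⁅v, w⁆ ∈ D := by
    intro v hv w hw
    have hU : ∀ u, u ∈ Subgroup.closure SU → u ∈ Wb ∧ ⁅v, u⁆ ∈ D := by
      intro u hu
      induction hu using Subgroup.closure_induction with
      | mem x hx =>
          exact ⟨hSUW hx, Subgroup.subset_closure (Or.inr ⟨v, hv, x, hx, rfl⟩)⟩
      | one => exact ⟨one_mem _, by simpa using one_mem D⟩
      | mul x y hx hy ihx ihy =>
          refine ⟨mul_mem ihx.1 ihy.1, ?_⟩
          rw [hF2 v x y ihx.1 ihy.1]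
          exact mul_mem ihx.2 ihy.2
      | inv x hx ihx =>
          refine ⟨inv_mem ihx.1, ?_⟩
          rw [hFinv v x ihx.1]
          exact inv_mem ihx.2
    obtain ⟨u, hu, hz⟩ := hUcov w hw
    have huW : u ∈ Wb := hUleW hu
    have hzW : u⁻¹ * w ∈ Wb := mul_mem (inv_mem huW) hw
    have hw' : w = u * (u⁻¹ * w) := by group
    rw [hw', hF2 v u (u⁻¹ * w) huW hzW, hF3 v _ hz, mul_one]
    exact (hU u hu).2
  -- Claim T : conjugation by elements of closure L preserves D ∩ Wb
  have claimT : ∀ e, e ∈ Subgroup.closure L →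
      ∀ y, y ∈ Wb → y ∈ D → (e * y * e⁻¹ ∈ D ∧ e * y * e⁻¹ ∈ Wb)
        ∧ (e⁻¹ * y * e ∈ D ∧ e⁻¹ * y * e ∈ Wb) := by
    intro e he
    induction he using Subgroup.closure_induction with
    | mem v hv =>
        intro y hyW hyD
        have h1 : v * y * v⁻¹ = ⁅v, y⁆ * y := by simp only [commutatorElement_def]; group
        have h2 : v⁻¹ * y * v = ⁅v⁻¹, y⁆ * y := by simp only [commutatorElement_def]; group
        constructor
        · constructor
          · rw [h1]; exact mul_mem (claimA v hv y hyW) hyD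
          · exact hWbN.conj_mem y hyW v
        · constructor
          · rw [h2]; exact mul_mem (claimA v⁻¹ (hLsym v hv) y hyW) hyD
          · have := hWbN.conj_mem y hyW v⁻¹
            simpa using this
    | one =>
        intro y hyW hyD
        simp only [one_mul, inv_one, mul_one]
        exact ⟨⟨hyD, hyW⟩, hyD, hyW⟩
    | mul a b ha hb iha ihb =>
        intro y hyW hyD
        have hb' := (ihb y hyW hyD).1
        have h1 : a * b * y * (a * b)⁻¹ = a * (b * y * b⁻¹) * a⁻¹ := by group
        have ha' := (iha _ hb'.2 hb'.1).1
        have hbi := (ihb _ ((iha y hyW hyD).2.2) ((iha y hyW hyD).2.1)).2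
        have h2 : (a * b)⁻¹ * y * (a * b) = b⁻¹ * (a⁻¹ * y * a) * b := by group
        constructor
        · rw [h1]; exact ⟨ha'.1, ha'.2⟩
        · rw [h2]; exact ⟨hbi.1, hbi.2⟩
    | inv a ha iha =>
        intro y hyW hyD
        have h := iha y hyW hyD
        refine ⟨⟨?_, ?_⟩, ?_, ?_⟩
        · simpa using h.2.1
        · simpa using h.2.2
        · simpa using h.1.1
        · simpa using h.1.2
  -- Any conjugate of an element of X lies in D
  have hconj : Group.conjugatesOfSet X ⊆ (D : Set Q) := by
    intro x hx
    rw [Group.mem_conjugatesOfSet_iff] at hx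
    obtain ⟨a, haX, hconj⟩ := hx
    obtain ⟨g, hg⟩ := isConj_iff.1 hconj
    obtain ⟨e, he, hk⟩ := hEcov g
    have hkz : ∀ q : Q, (e⁻¹ * g) * q = q * (e⁻¹ * g) := hcen _ hk
    have hgae : g * a * g⁻¹ = e * a * e⁻¹ := by
      have h1 : g = e * (e⁻¹ * g) := by group
      calc g * a * g⁻¹ = e * ((e⁻¹ * g) * a * (e⁻¹ * g)⁻¹) * e⁻¹ := by
            rw [h1]; group
        _ = e * a * e⁻¹ := by rw [hkz a]; group
    rw [← hg, hgae]
    exact ((claimT e he a (hXW haX) (Subgroup.subset_closure (Or.inl haX))).1).1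
  have hWD : Wb ≤ D := by
    rw [hWX]
    show Subgroup.closure (Group.conjugatesOfSet X) ≤ D
    rw [Subgroup.closure_le]
    exact hconj
  have : Wb = D := le_antisymm hWD hDW
  rw [this]; exact hDfg

end Aux

section Main

variable {G H : Type*} [Group G] [Group H]

open Subgroup

/-- From finite generation of the image in `G ⧸ ⁅W,W⁆` we get finite generation of `W`. -/
private lemma fg_of_abelianization_fg (φ : G →* H) (hker : φ.ker ≤ Subgroup.center G)
    (W UW : Subgroup G) [hWN : W.Normal]
    (hUWle : UW ≤ W) (hUWfg : UW.FG)
    (hUWcov : ∀ w ∈ W, ∃ u ∈ UW, u⁻¹ * w ∈ φ.ker)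
    (hfg : (W.map (QuotientGroup.mk' ⁅W, W⁆)).FG) : W.FG := by
  set π := QuotientGroup.mk' (⁅W, W⁆ : Subgroup G) with hπ
  obtain ⟨SB, hSB⟩ := hfg
  have hmem : ∀ b ∈ (SB : Set (G ⧸ (⁅W, W⁆ : Subgroup G))), ∃ w, w ∈ W ∧ π w = b := by
    intro b hb
    have : b ∈ W.map π := by rw [← hSB]; exact Subgroup.subset_closure hb
    obtain ⟨w, hw, hwb⟩ := this
    exact ⟨w, hw, hwb⟩
  choose f hfW hfπ using hmem
  haveI : Finite (SB : Set (G ⧸ (⁅W, W⁆ : Subgroup G))) := Set.Finite.to_subtype SB.finite_toSet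
  set C : Set G := Set.range (fun p : (SB : Set (G ⧸ (⁅W, W⁆ : Subgroup G))) => f p p.2) with hC
  obtain ⟨SW, hSW⟩ := hUWfg
  set V := Subgroup.closure ((SW : Set G) ∪ C) with hV
  have hVfg : V.FG := (Subgroup.fg_iff _).2 ⟨_, rfl, (SW.finite_toSet).union (Set.finite_range _)⟩
  have hUWV : UW ≤ V := by
    rw [← hSW, Subgroup.closure_le]
    exact fun x hx => Subgroup.subset_closure (Or.inl hx)
  have hVW : V ≤ W := by
    rw [hV, Subgroup.closure_le]
    rintro x (hx | ⟨p, rfl⟩)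
    · exact hUWle (hSW ▸ Subgroup.subset_closure hx)
    · exact hfW p p.2
  -- commutator subgroup of W is inside UW hence inside V
  have hWWV : (⁅W, W⁆ : Subgroup G) ≤ V := by
    rw [Subgroup.commutator_le]
    intro w₁ h₁ w₂ h₂
    obtain ⟨u₁, hu₁, hz₁⟩ := hUWcov w₁ h₁
    obtain ⟨u₂, hu₂, hz₂⟩ := hUWcov w₂ h₂
    have hc₁ : ∀ g : G, (u₁⁻¹ * w₁) * g = g * (u₁⁻¹ * w₁) := fun g =>
      (Subgroup.mem_center_iff.1 (hker hz₁) g).symm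
    have hc₂ : ∀ g : G, (u₂⁻¹ * w₂) * g = g * (u₂⁻¹ * w₂) := fun g =>
      (Subgroup.mem_center_iff.1 (hker hz₂) g).symm
    have hw₁ : w₁ = u₁ * (u₁⁻¹ * w₁) := by group
    have hw₂ : w₂ = u₂ * (u₂⁻¹ * w₂) := by group
    have : ⁅w₁, w₂⁆ = ⁅u₁, u₂⁆ := by
      rw [hw₁, hw₂, comm_cancel_left _ _ _ hc₁, comm_cancel_right _ _ _ hc₂]
    rw [this]
    have : ⁅u₁, u₂⁆ = u₁ * u₂ * u₁⁻¹ * u₂⁻¹ := commutatorElement_def u₁ u₂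
    rw [this]
    exact mul_mem (mul_mem (mul_mem (hUWV hu₁) (hUWV hu₂)) (inv_mem (hUWV hu₁)))
      (inv_mem (hUWV hu₂))
  have hWV : W ≤ V := by
    intro w hw
    have hπw : π w ∈ Subgroup.closure (SB : Set (G ⧸ (⁅W, W⁆ : Subgroup G))) := by
      rw [hSB]; exact ⟨w, hw, rfl⟩
    have hle : Subgroup.closure (SB : Set (G ⧸ (⁅W, W⁆ : Subgroup G))) ≤ V.map π := by
      rw [Subgroup.closure_le]
      intro b hb
      exact ⟨f b hb, Subgroup.subset_closure (Or.inr ⟨⟨b, hb⟩, rfl⟩), hfπ b hb⟩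
    obtain ⟨v, hv, hvw⟩ := hle hπw
    have : v⁻¹ * w ∈ (⁅W, W⁆ : Subgroup G) := by
      have : v⁻¹ * w ∈ π.ker := by
        rw [MonoidHom.mem_ker, map_mul, map_inv, hvw, inv_mul_cancel]
      rwa [hπ, QuotientGroup.ker_mk'] at this
    have hw' : w = v * (v⁻¹ * w) := by group
    rw [hw']
    exact mul_mem hv (hWWV this)
  have : W = V := le_antisymm hWV hVW
  rw [this]; exact hVfg

/-- Main step: if `P` is a normal subgroup admitting a finitely generated cover modulo the
central kernel, then `⁅P, ⊤⁆` is finitely generated. -/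
private lemma commutator_top_fg (φ : G →* H) (hsurj : Function.Surjective φ)
    (hker : φ.ker ≤ Subgroup.center G) (hH : IsNoetherianGroup H)
    (P U : Subgroup G) [hPN : P.Normal]
    (hUfg : U.FG) (hUle : U ≤ P) (hUcov : ∀ p ∈ P, ∃ u ∈ U, u⁻¹ * p ∈ φ.ker) :
    (⁅P, (⊤ : Subgroup G)⁆ : Subgroup G).FG := by
  classical
  obtain ⟨E, hEfg, -, hEcov⟩ := exists_fg_cover φ hH (⊤ : Subgroup G)
  set W := (⁅P, (⊤ : Subgroup G)⁆ : Subgroup G) with hW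
  haveI hWN : W.Normal := Subgroup.commutator_normal P ⊤
  -- W = ⁅U, E⁆
  have hWUE : W = ⁅U, E⁆ := by
    apply le_antisymm
    · rw [hW, Subgroup.commutator_le]
      intro p hp g hg
      obtain ⟨u, hu, hz⟩ := hUcov p hp
      obtain ⟨e, he, hk⟩ := hEcov g (Subgroup.mem_top g)
      have hc₁ : ∀ x : G, (u⁻¹ * p) * x = x * (u⁻¹ * p) := fun x =>
        (Subgroup.mem_center_iff.1 (hker hz) x).symm
      have hc₂ : ∀ x : G, (e⁻¹ * g) * x = x * (e⁻¹ * g) := fun x =>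
        (Subgroup.mem_center_iff.1 (hker hk) x).symm
      have hp' : p = u * (u⁻¹ * p) := by group
      have hg' : g = e * (e⁻¹ * g) := by group
      have : ⁅p, g⁆ = ⁅u, e⁆ := by
        rw [hp', hg', comm_cancel_left _ _ _ hc₁, comm_cancel_right _ _ _ hc₂]
      rw [this]
      exact Subgroup.commutator_mem_commutator hu he
    · exact Subgroup.commutator_mono hUle le_top
  obtain ⟨SU, hSU⟩ := hUfg
  obtain ⟨SE, hSE⟩ := hEfg
  set X : Set G := {x | ∃ s ∈ (SU : Set G), ∃ t ∈ (SE : Set G), x = ⁅s, t⁆} with hX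
  have hXfin : X.Finite := by
    have : X = Set.image2 (fun s t => ⁅s, t⁆) (SU : Set G) (SE : Set G) := by
      ext x
      simp only [Set.mem_setOf_eq, Set.mem_image2]
      constructor
      · rintro ⟨s, hs, t, ht, rfl⟩; exact ⟨s, hs, t, ht, rfl⟩
      · rintro ⟨s, hs, t, ht, rfl⟩; exact ⟨s, hs, t, ht, rfl⟩
    rw [this]
    exact Set.Finite.image2 _ SU.finite_toSet SE.finite_toSet
  have hXW : X ⊆ (W : Set G) := by
    rintro x ⟨s, hs, t, ht, rfl⟩
    rw [hW]
    exact Subgroup.commutator_mem_commutator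
      (hUle (hSU ▸ Subgroup.subset_closure hs)) (Subgroup.mem_top t)
  -- W is the normal closure of X
  have hWnc : W = Subgroup.normalClosure X := by
    apply le_antisymm
    · rw [hWUE, ← hSU, ← hSE]
      exact commutator_closure_le_normalClosure (SU : Set G) (SE : Set G)
    · exact Subgroup.normalClosure_le_normal hXW
  -- pass to the quotient by ⁅W, W⁆
  set π := QuotientGroup.mk' (⁅W, W⁆ : Subgroup G) with hπ
  have hπsurj : Function.Surjective π := QuotientGroup.mk'_surjective _
  set Wb := W.map π with hWb
  haveI hWbN : Wb.Normal := Subgroup.Normal.map hWN π hπsurj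
  -- Wb is abelian
  have hab : ∀ x ∈ Wb, ∀ y ∈ Wb, x * y = y * x := by
    rintro x ⟨w, hw, rfl⟩ y ⟨w', hw', rfl⟩
    rw [← commutatorElement_eq_one_iff_mul_comm]
    have : ⁅π w, π w'⁆ = π ⁅w, w'⁆ := (map_commutatorElement π w w').symm
    rw [this]
    have hmem : ⁅w, w'⁆ ∈ π.ker := by
      rw [hπ, QuotientGroup.ker_mk']
      exact Subgroup.commutator_mem_commutator hw hw'
    rwa [MonoidHom.mem_ker] at hmem
  -- the central subgroup in the quotient
  set Kc := φ.ker.map π with hKc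
  have hcen : ∀ z ∈ Kc, ∀ g : G ⧸ (⁅W, W⁆ : Subgroup G), z * g = g * z := by
    rintro z ⟨k, hk, rfl⟩ g
    obtain ⟨g₀, rfl⟩ := hπsurj g
    rw [← map_mul, ← map_mul]
    congr 1
    exact (Subgroup.mem_center_iff.1 (hker hk) g₀).symm
  -- cover of W inside W
  obtain ⟨UW, hUWfg, hUWle, hUWcov⟩ := exists_fg_cover φ hH W
  obtain ⟨SW, hSW⟩ := hUWfg
  -- the set L : symmetric generators of the image of E
  set L : Set (G ⧸ (⁅W, W⁆ : Subgroup G)) := (π '' (SE : Set G)) ∪ (π '' (SE : Set G))⁻¹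
    with hL
  have hLfin : L.Finite :=
    ((SE.finite_toSet).image π).union (((SE.finite_toSet).image π).inv)
  have hLsym : ∀ v ∈ L, v⁻¹ ∈ L := by
    rintro v (hv | hv)
    · exact Or.inr (by simpa using hv)
    · refine Or.inl ?_
      have : v⁻¹ ∈ ((π '' (SE : Set G))⁻¹)⁻¹ := Set.inv_mem_inv.2 hv
      simpa using this
  have hπEL : ∀ e ∈ E, π e ∈ Subgroup.closure L := by
    intro e he
    have h1 : π e ∈ E.map π := ⟨e, he, rfl⟩
    have h2 : E.map π = Subgroup.closure (π '' (SE : Set G)) := by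
      rw [← hSE, MonoidHom.map_closure]
    have h3 : Subgroup.closure (π '' (SE : Set G)) ≤ Subgroup.closure L :=
      Subgroup.closure_mono Set.subset_union_left
    exact h3 (h2 ▸ h1)
  have hEcovQ : ∀ g : G ⧸ (⁅W, W⁆ : Subgroup G), ∃ e ∈ Subgroup.closure L, e⁻¹ * g ∈ Kc := by
    intro g
    obtain ⟨g₀, rfl⟩ := hπsurj g
    obtain ⟨e, he, hk⟩ := hEcov g₀ (Subgroup.mem_top g₀)
    refine ⟨π e, hπEL e he, ?_⟩
    have : (π e)⁻¹ * π g₀ = π (e⁻¹ * g₀) := by rw [map_mul, map_inv]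
    rw [this]
    exact ⟨e⁻¹ * g₀, hk, rfl⟩
  -- the covering set SU in the quotient
  set SUq : Set (G ⧸ (⁅W, W⁆ : Subgroup G)) := π '' (SW : Set G) with hSUq
  have hSUqfin : SUq.Finite := (SW.finite_toSet).image π
  have hSUqW : SUq ⊆ Wb := by
    rintro x ⟨u, hu, rfl⟩
    exact ⟨u, hUWle (hSW ▸ Subgroup.subset_closure hu), rfl⟩
  have hUcovQ : ∀ w ∈ Wb, ∃ u ∈ Subgroup.closure SUq, u⁻¹ * w ∈ Kc := by
    rintro w ⟨w₀, hw₀, rfl⟩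
    obtain ⟨u, hu, hz⟩ := hUWcov w₀ hw₀
    have huq : π u ∈ Subgroup.closure SUq := by
      have h1 : π u ∈ UW.map π := ⟨u, hu, rfl⟩
      have h2 : UW.map π = Subgroup.closure SUq := by rw [← hSW, MonoidHom.map_closure]
      exact h2 ▸ h1
    refine ⟨π u, huq, ?_⟩
    have : (π u)⁻¹ * π w₀ = π (u⁻¹ * w₀) := by rw [map_mul, map_inv]
    rw [this]
    exact ⟨u⁻¹ * w₀, hz, rfl⟩
  -- Wb = normal closure of the image of X
  have hWbnc : Wb = Subgroup.normalClosure (π '' X) := by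
    have h := Subgroup.map_normalClosure X π hπsurj
    rw [← hWnc] at h
    exact h
  have hπXW : π '' X ⊆ (Wb : Set _) := by
    rintro x ⟨x₀, hx₀, rfl⟩
    exact ⟨x₀, hXW hx₀, rfl⟩
  -- apply the abelian trap
  have hWbfg : Wb.FG :=
    abelian_trap Wb hWbN hab Kc hcen (π '' X) hπXW (hXfin.image π) hWbnc
      L hLfin hLsym hEcovQ SUq hSUqfin hSUqW hUcovQ
  -- transfer back
  exact fg_of_abelianization_fg φ hker W UW hUWle ((Subgroup.fg_iff _).2
    ⟨SW, hSW, SW.finite_toSet⟩) hUWcov hWbfg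

end Main

/-- Let `H` be a Noetherian group and `G` a central extension of `H`. Then the lower central
series term `γₙ(G)` is finitely generated for every `n ≥ 2`.
(Here `γₙ = lowerCentralSeries · (n - 1)`, since Mathlib's lower central series starts at
index `0`.) -/
theorem lowerCentralSeries_fg_of_central_extension_of_noetherian
    {G H : Type*} [Group G] [Group H] (φ : G →* H)
    (hsurj : Function.Surjective φ) (hker : φ.ker ≤ Subgroup.center G)
    (hH : IsNoetherianGroup H) :
    ∀ n : ℕ, 2 ≤ n → (Subgroup.lowerCentralSeries (⊤ : Subgroup G) (n - 1)).FG := by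
  have main : ∀ m : ℕ, (Subgroup.lowerCentralSeries (⊤ : Subgroup G) (m + 1)).FG := by
    intro m
    induction m with
    | zero =>
        obtain ⟨E, hEfg, hEle, hEcov⟩ := exists_fg_cover φ hH (⊤ : Subgroup G)
        have h1 : Subgroup.lowerCentralSeries (⊤ : Subgroup G) 1 = ⁅(⊤ : Subgroup G), ⊤⁆ := rfl
        rw [h1]
        exact commutator_top_fg φ hsurj hker hH ⊤ E hEfg le_top
          (fun p _ => hEcov p (Subgroup.mem_top p))
    | succ m ih =>
        have h1 : Subgroup.lowerCentralSeries (⊤ : Subgroup G) (m + 1 + 1) = ⁅Subgroup.lowerCentralSeries (⊤ : Subgroup G) (m + 1), ⊤⁆ := rfl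
        rw [h1]
        exact commutator_top_fg φ hsurj hker hH (Subgroup.lowerCentralSeries (⊤ : Subgroup G) (m + 1))
          (Subgroup.lowerCentralSeries (⊤ : Subgroup G) (m + 1)) ih le_rfl
          (fun p hp => ⟨p, hp, by simp⟩)
  intro n hn
  obtain ⟨k, rfl⟩ : ∃ k, n = k + 2 := ⟨n - 2, by omega⟩
  have : k + 2 - 1 = k + 1 := rfl
  rw [this]
  exact main k
end
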